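/- arXiv:math/0106244 — 4 statements merged into one kernel-verified Lean document; each statement's English description precedes it below -/
import Mathlib

section
/- Let M_n be the free k-vector space on the set of isomorphism classes of rooted trees with vertices labeled by {1,…,n}, equipped with the grafting product s ⋆ t = Σ_{v ∈ t} s ∘_v t (grafting s onto each vertex v of t by a new edge, preserving all vertex labels); this is the free pre-Lie algebra on n generators (Chapoton–Livernet). Let L_n be the free k-vector space on the set of isomorphism classes of nonempty n-edge-colored rooted trees with the grafting product D_s *' D_t = Σ_{v ∈ t} Σ_{p=1}^n D_{s ∘_v^p t}. Define ψ : L_n → M_n by ψ(D_t) = Σ_{i=1}^n t_i, where t_i is the vertex-labeled rooted tree obtained from the edge-colored tree t by labeling each non-root vertex with the color of the edge joining it to the vertex directly below it, and labeling the root with i. Then ψ is an injective linear map satisfying ψ(D_s *' D_t) = ψ(D_s) ⋆ ψ(D_t), and its image is the span of all sums Σ_{i=1}^n t_i of labeled trees t_1,…,t_n that differ only in the label of the root, where the root of t_i is labeled i. -/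
/- Core combinatorics of n-edge-colored rooted forests.

A forest is encoded by a finite set of vertices (natural numbers), a
parent function (pointing one step towards the root) and a coloring
function assigning to each non-root vertex the color of the edge
connecting it to its parent.  Well-formedness (`WF`) asks that the parent
function is supported on the vertex set and is acyclic. -/

open scoped Classical

noncomputable section

structure PForest (n : ℕ) where
  verts : Finset ℕ
  parent : ℕ → Option ℕ
  color : ℕ → Fin n

namespace PForest

variable {n : ℕ}

/-- well-formedness: edges join vertices, and the parent relation is
acyclic. -/
def WF (t : PForest n) : Prop :=
  (∀ v w : ℕ, t.parent v = some w → v ∈ t.verts ∧ w ∈ t.verts) ∧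
    ∃ rk : ℕ → ℕ, ∀ v w : ℕ, t.parent v = some w → rk w < rk v

/-- one step towards the root: `w` is the parent of `v`. -/
def Step (t : PForest n) (v w : ℕ) : Prop := t.parent v = some w

/-- `w` lies (weakly) on the path from `v` to the root of its component. -/
def Anc (t : PForest n) (v w : ℕ) : Prop := Relation.ReflTransGen t.Step v w

def nearestAncAux (t : PForest n) (S : Finset ℕ) : ℕ → ℕ → Option ℕ
  | 0, _ => none
  | fuel + 1, v =>
    match t.parent v with
    | none => none
    | some w => if w ∈ S then some w else nearestAncAux t S fuel w

/-- the first vertex of `S` strictly below `v`; this is the parent of `v`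
in the subforest induced on `S`. -/
def nearestAnc (t : PForest n) (S : Finset ℕ) (v : ℕ) : Option ℕ :=
  nearestAncAux t S t.verts.card v

def lastBeforeAux (t : PForest n) (S : Finset ℕ) : ℕ → ℕ → ℕ
  | 0, v => v
  | fuel + 1, v =>
    match t.parent v with
    | none => v
    | some w => if w ∈ S then v else lastBeforeAux t S fuel w

/-- the last vertex on the path from `v` down to `nearestAnc t S v`
before reaching it; the color of the edge of the induced subforest below
`v` is the (ambient) color of this vertex. -/
def lastBefore (t : PForest n) (S : Finset ℕ) (v : ℕ) : ℕ :=
  lastBeforeAux t S t.verts.card v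

/-- `pcount t S s j v` is the number of edges of (induced) color `j` on
the path from `v` to the root of its component in the subforest of `t`
induced on `S`, whose lower vertex lies outside `s`.  (Edges of the
induced subforest are indexed by their upper vertex `x`; the lower vertex
is `nearestAnc t S x` and the induced color is the ambient color of
`lastBefore t S x`.) -/
def pcount (t : PForest n) (S s : Finset ℕ) (j : Fin n) (v : ℕ) : ℕ :=
  (S.filter fun x => t.Anc v x ∧ t.color (t.lastBefore S x) = j ∧
      ∃ w, t.nearestAnc S x = some w ∧ w ∉ s).card

/-- the subforest of `u` induced on `S`, as a forest in its own right. -/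
def restrict (u : PForest n) (S : Finset ℕ) : PForest n where
  verts := S ∩ u.verts
  parent := fun v => if v ∈ S ∩ u.verts then u.nearestAnc S v else none
  color := fun v => u.color (u.lastBefore S v)

/-- a forest is a (nonempty) tree when it has exactly one root. -/
def IsTree (t : PForest n) : Prop :=
  (t.verts.filter fun v => t.parent v = none).card = 1

/-- `e` is an isomorphism of n-colored forests from `s` to `t`: a
bijection of the vertices preserving the parent relation and the colors
of edges. -/
def IsIsoFn (s t : PForest n) (e : {x // x ∈ s.verts} ≃ {x // x ∈ t.verts}) : Prop :=
  (∀ v w : {x // x ∈ s.verts},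
      s.parent (v : ℕ) = some (w : ℕ) ↔ t.parent ((e v : ℕ)) = some ((e w : ℕ))) ∧
    ∀ v : {x // x ∈ s.verts}, (s.parent (v : ℕ)).isSome →
      t.color ((e v : ℕ)) = s.color (v : ℕ)

/-- isomorphism of n-colored forests. -/
def PIso (s t : PForest n) : Prop := ∃ e, IsIsoFn s t e

end PForest

/-- a (well-formed, nonempty) n-colored rooted tree. -/
def TreeObj (n : ℕ) : Type := {t : PForest n // t.WF ∧ t.IsTree}

/-- isomorphism classes of n-colored rooted trees. -/
def TreeClass (n : ℕ) : Type := Quot fun a b : TreeObj n => PForest.PIso a.1 b.1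

/-- the one-vertex tree. -/
def unitTree (n : ℕ) [NeZero n] : PForest n :=
  ⟨{0}, fun _ => none, fun _ => 0⟩

theorem unitTree_wf (n : ℕ) [NeZero n] : (unitTree n).WF :=
  ⟨fun v w h => by simp [unitTree] at h, ⟨id, fun v w h => by simp [unitTree] at h⟩⟩

theorem unitTree_isTree (n : ℕ) [NeZero n] : (unitTree n).IsTree := by
  simp [PForest.IsTree, unitTree]

def defaultTreeObj (n : ℕ) [NeZero n] : TreeObj n :=
  ⟨unitTree n, unitTree_wf n, unitTree_isTree n⟩

/-- the isomorphism class of a tree (junk value: the class of the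
one-vertex tree, if the given forest is not a well-formed tree). -/
def mkClass {n : ℕ} [NeZero n] (t : PForest n) : TreeClass n :=
  if h : t.WF ∧ t.IsTree then Quot.mk _ (⟨t, h⟩ : TreeObj n)
  else Quot.mk _ (defaultTreeObj n)

end

noncomputable section

namespace PForest

variable {n : ℕ}

/-- grafting of s onto the vertex v of t by an edge of color p: the
disjoint union of s and t (t relabelled by doubling, s by doubling plus
one) with one new edge, of color p, joining the root of s to v. -/
def graft (s t : PForest n) (v : ℕ) (p : Fin n) : PForest n where
  verts := t.verts.image (fun x => 2 * x) ∪ s.verts.image (fun x => 2 * x + 1)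
  parent := fun x =>
    if x % 2 = 0 then (t.parent (x / 2)).map fun w => 2 * w
    else
      match s.parent (x / 2) with
      | some w => some (2 * w + 1)
      | none => if x / 2 ∈ s.verts then some (2 * v) else none
  color := fun x =>
    if x % 2 = 0 then t.color (x / 2)
    else
      match s.parent (x / 2) with
      | some _ => s.color (x / 2)
      | none => p

/-- the vertices lying (weakly) above x: the component not containing the
root after deleting the edge below x. -/
def aboveSet (u : PForest n) (x : ℕ) : Finset ℕ :=
  u.verts.filter fun y => u.Anc y x

/-- n(s,t,u): the number of edges of u (indexed by their upper vertex)
whose deletion leaves the component not containing the root isomorphic to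
s and the component containing the root isomorphic to t. -/
def nCount (s t u : PForest n) : ℕ :=
  (u.verts.filter fun x => (u.parent x).isSome ∧
    PIso (u.restrict (u.aboveSet x)) s ∧
    PIso (u.restrict (u.verts \ u.aboveSet x)) t).card

/-- the order of the automorphism group of the n-colored forest t. -/
def autCount (t : PForest n) : ℕ :=
  Nat.card {e : {x // x ∈ t.verts} ≃ {x // x ∈ t.verts} // IsIsoFn t t e}

/-- the size of the orbit of the vertex v under the automorphism group. -/
def orbitCount (t : PForest n) (v : ℕ) (hv : v ∈ t.verts) : ℕ :=
  Nat.card {w : {x // x ∈ t.verts} //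
    ∃ e : {x // x ∈ t.verts} ≃ {x // x ∈ t.verts}, IsIsoFn t t e ∧ e ⟨v, hv⟩ = w}

end PForest

end

/- STATEMENT 8: the map ψ sending an edge-colored tree to the sum over
root labels of the corresponding vertex-labeled trees is an injective
morphism from the grafting product on edge-colored trees to the grafting
product on vertex-labeled trees (the free pre-Lie algebra of
Chapoton-Livernet), with image the span of the sums of labeled trees
differing only in the label of the root.

Vertex-labeled trees are encoded by the same structure `PForest`, the
function `color` being read as the labelling of the vertices; their
isomorphisms must preserve all labels. -/

noncomputable section
open PForest

variable (K : Type*) [Field K] {n : ℕ} [NeZero n]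

/-- label-preserving isomorphisms of vertex-labeled forests. -/
def LIsoFn {n : ℕ} (s t : PForest n)
    (e : {x // x ∈ s.verts} ≃ {x // x ∈ t.verts}) : Prop :=
  (∀ v w : {x // x ∈ s.verts},
      s.parent (v : ℕ) = some (w : ℕ) ↔ t.parent ((e v : ℕ)) = some ((e w : ℕ))) ∧
    ∀ v : {x // x ∈ s.verts}, t.color ((e v : ℕ)) = s.color (v : ℕ)

def LIso {n : ℕ} (s t : PForest n) : Prop := ∃ e, LIsoFn s t e

/-- isomorphism classes of vertex-labeled rooted trees. -/
def LTreeClass (n : ℕ) : Type := Quot fun a b : TreeObj n => LIso a.1 b.1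

def mkClassL {n : ℕ} [NeZero n] (t : PForest n) : LTreeClass n :=
  if h : t.WF ∧ t.IsTree then Quot.mk _ (⟨t, h⟩ : TreeObj n)
  else Quot.mk _ (defaultTreeObj n)

/-- grafting of vertex-labeled trees (labels preserved). -/
def graftL {n : ℕ} (s t : PForest n) (v : ℕ) : PForest n where
  verts := t.verts.image (fun x => 2 * x) ∪ s.verts.image (fun x => 2 * x + 1)
  parent := fun x =>
    if x % 2 = 0 then (t.parent (x / 2)).map fun w => 2 * w
    else
      match s.parent (x / 2) with
      | some w => some (2 * w + 1)
      | none => if x / 2 ∈ s.verts then some (2 * v) else none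
  color := fun x => if x % 2 = 0 then t.color (x / 2) else s.color (x / 2)

/-- the grafting product on basis classes of labeled trees:
`D_s ⋆ D_t = Σ_{v ∈ t} D_{s ∘_v t}`. -/
def graftSumL (S T : LTreeClass n) : LTreeClass n →₀ K :=
  ∑ v ∈ (Quot.out T).1.verts,
    Finsupp.single (mkClassL (graftL (Quot.out S).1 (Quot.out T).1 v)) (1 : K)

/-- the bilinear grafting product on the span of labeled trees. -/
def starM : (LTreeClass n →₀ K) →ₗ[K] (LTreeClass n →₀ K) →ₗ[K] (LTreeClass n →₀ K) :=
  Finsupp.lsum K fun S => LinearMap.toSpanSingleton K _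
    (Finsupp.lsum K fun T => LinearMap.toSpanSingleton K _ (graftSumL K S T))

/-- the grafting product on basis classes of edge-colored trees:
`D_s *' D_t = Σ_{v ∈ t} Σ_p D_{s ∘_v^p t}`. -/
def graftSum (S T : TreeClass n) : TreeClass n →₀ K :=
  ∑ v ∈ (Quot.out T).1.verts, ∑ p : Fin n,
    Finsupp.single (mkClass (graft (Quot.out S).1 (Quot.out T).1 v p)) (1 : K)

/-- the bilinear grafting product on the span of edge-colored trees. -/
def grmul : (TreeClass n →₀ K) →ₗ[K] (TreeClass n →₀ K) →ₗ[K] (TreeClass n →₀ K) :=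
  Finsupp.lsum K fun S => LinearMap.toSpanSingleton K _
    (Finsupp.lsum K fun T => LinearMap.toSpanSingleton K _ (graftSum K S T))

/-- the vertex-labeled tree obtained from an edge-colored tree by
labeling each non-root vertex with the color of the edge joining it to
the vertex below it, and the root with i.  (Applied to a vertex-labeled
tree, it relabels the root with i and keeps the other labels.) -/
def toLabeled {n : ℕ} (t : PForest n) (i : Fin n) : PForest n :=
  ⟨t.verts, t.parent, fun v => if t.parent v = none then i else t.color v⟩

/-- the map ψ : `ψ(D_t) = Σ_{i=1}^n t_i`. -/
def psi : (TreeClass n →₀ K) →ₗ[K] (LTreeClass n →₀ K) :=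
  Finsupp.lsum K fun T => LinearMap.toSpanSingleton K _
    (∑ i : Fin n, Finsupp.single (mkClassL (toLabeled (Quot.out T).1 i)) (1 : K))


/-! ### Auxiliary development -/

section PsiAux

variable {n : ℕ}

/-! #### basic facts about isomorphisms -/

lemma liso_refl (t : PForest n) : LIso t t :=
  ⟨Equiv.refl _, fun _ _ => Iff.rfl, fun _ => rfl⟩

lemma liso_symm {s t : PForest n} (h : LIso s t) : LIso t s := by
  obtain ⟨e, h1, h2⟩ := h
  refine ⟨e.symm, fun v w => ?_, fun v => ?_⟩
  · rw [h1 (e.symm v) (e.symm w), e.apply_symm_apply, e.apply_symm_apply]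
  · rw [← h2 (e.symm v), e.apply_symm_apply]

lemma liso_trans {s t u : PForest n} (h : LIso s t) (h' : LIso t u) : LIso s u := by
  obtain ⟨e, h1, h2⟩ := h
  obtain ⟨f, g1, g2⟩ := h'
  exact ⟨e.trans f, fun v w => (h1 v w).trans (g1 (e v) (e w)),
    fun v => (g2 (e v)).trans (h2 v)⟩

lemma piso_refl (t : PForest n) : PIso t t :=
  ⟨Equiv.refl _, fun _ _ => Iff.rfl, fun _ _ => rfl⟩

lemma piso_symm {s t : PForest n} (ht : t.WF) (h : PIso s t) : PIso t s := by
  obtain ⟨e, h1, h2⟩ := h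
  refine ⟨e.symm, fun v w => ?_, fun v hv => ?_⟩
  · rw [h1 (e.symm v) (e.symm w), e.apply_symm_apply, e.apply_symm_apply]
  · obtain ⟨u, hu⟩ := Option.isSome_iff_exists.mp hv
    have hu2 : u ∈ t.verts := (ht.1 _ _ hu).2
    have hpar : s.parent ((e.symm v : ℕ)) = some ((e.symm ⟨u, hu2⟩ : ℕ)) := by
      rw [h1 (e.symm v) (e.symm ⟨u, hu2⟩), e.apply_symm_apply, e.apply_symm_apply]
      exact hu
    have hc := h2 (e.symm v) (by rw [hpar]; rfl)
    rw [e.apply_symm_apply] at hc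
    exact hc.symm

lemma piso_trans {s t u : PForest n} (hs : s.WF) (h : PIso s t) (h' : PIso t u) :
    PIso s u := by
  obtain ⟨e, h1, h2⟩ := h
  obtain ⟨f, g1, g2⟩ := h'
  refine ⟨e.trans f, fun v w => (h1 v w).trans (g1 (e v) (e w)), fun v hv => ?_⟩
  obtain ⟨w, hw⟩ := Option.isSome_iff_exists.mp hv
  have hw2 : w ∈ s.verts := (hs.1 _ _ hw).2
  have hts : t.parent ((e v : ℕ)) = some ((e ⟨w, hw2⟩ : ℕ)) := (h1 v ⟨w, hw2⟩).mp hw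
  calc u.color ((f (e v) : ℕ)) = t.color ((e v : ℕ)) := g2 (e v) (by rw [hts]; rfl)
    _ = s.color (v : ℕ) := h2 v hv

lemma pRel_equiv : Equivalence (fun a b : TreeObj n => PIso a.1 b.1) :=
  ⟨fun a => piso_refl a.1, fun {a b} h => piso_symm b.2.1 h,
    fun {a _ _} h h' => piso_trans a.2.1 h h'⟩

lemma lRel_equiv : Equivalence (fun a b : TreeObj n => LIso a.1 b.1) :=
  ⟨fun a => liso_refl a.1, fun {_ _} h => liso_symm h, fun {_ _ _} h h' => liso_trans h h'⟩

lemma treeClass_mk_eq {a b : TreeObj n} (h : (Quot.mk _ a : TreeClass n) = Quot.mk _ b) :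
    PIso a.1 b.1 := pRel_equiv.eqvGen_iff.mp (Quot.eqvGen_exact h)

lemma lTreeClass_mk_eq {a b : TreeObj n} (h : (Quot.mk _ a : LTreeClass n) = Quot.mk _ b) :
    LIso a.1 b.1 := lRel_equiv.eqvGen_iff.mp (Quot.eqvGen_exact h)

lemma out_mk_piso (a : TreeObj n) : PIso (Quot.out (Quot.mk _ a : TreeClass n)).1 a.1 :=
  treeClass_mk_eq (by rw [Quot.out_eq])

lemma out_mk_liso (a : TreeObj n) : LIso (Quot.out (Quot.mk _ a : LTreeClass n)).1 a.1 :=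
  lTreeClass_mk_eq (by rw [Quot.out_eq])

variable [NeZero n]

lemma mkClass_eq_mk {t : PForest n} (h : t.WF ∧ t.IsTree) :
    mkClass t = Quot.mk _ (⟨t, h⟩ : TreeObj n) := dif_pos h

lemma mkClassL_eq_mk {t : PForest n} (h : t.WF ∧ t.IsTree) :
    mkClassL t = Quot.mk _ (⟨t, h⟩ : TreeObj n) := dif_pos h

lemma mkClassL_eq_of_liso {a b : PForest n} (ha : a.WF ∧ a.IsTree) (hb : b.WF ∧ b.IsTree)
    (h : LIso a b) : mkClassL a = mkClassL b := by
  rw [mkClassL_eq_mk ha, mkClassL_eq_mk hb]; exact Quot.sound h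

lemma out_mkClassL {t : PForest n} (h : t.WF ∧ t.IsTree) :
    LIso (Quot.out (mkClassL t)).1 t := by
  rw [mkClassL_eq_mk h]; exact out_mk_liso _

lemma out_mkClass {t : PForest n} (h : t.WF ∧ t.IsTree) :
    PIso (Quot.out (mkClass t)).1 t := by
  rw [mkClass_eq_mk h]; exact out_mk_piso _

lemma mkClass_out (T : TreeClass n) : mkClass (Quot.out T).1 = T := by
  rw [mkClass_eq_mk (Quot.out T).2]
  exact Quot.out_eq T


/-! #### roots -/

lemma root_map {s t : PForest n} (hs : s.WF) (ht : t.WF)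
    {e : {x // x ∈ s.verts} ≃ {x // x ∈ t.verts}}
    (hpar : ∀ v w : {x // x ∈ s.verts},
      s.parent (v : ℕ) = some (w : ℕ) ↔ t.parent ((e v : ℕ)) = some ((e w : ℕ)))
    (v : {x // x ∈ s.verts}) :
    s.parent (v : ℕ) = none ↔ t.parent ((e v : ℕ)) = none := by
  constructor
  · intro h
    by_contra hne
    obtain ⟨u, hu⟩ := Option.ne_none_iff_exists'.mp hne
    have hu2 : u ∈ t.verts := (ht.1 _ _ hu).2
    have : s.parent (v : ℕ) = some ((e.symm ⟨u, hu2⟩ : ℕ)) := by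
      rw [hpar v (e.symm ⟨u, hu2⟩), e.apply_symm_apply]; exact hu
    rw [h] at this; simp at this
  · intro h
    by_contra hne
    obtain ⟨u, hu⟩ := Option.ne_none_iff_exists'.mp hne
    have hu2 : u ∈ s.verts := (hs.1 _ _ hu).2
    have := (hpar v ⟨u, hu2⟩).mp hu
    rw [h] at this; simp at this

lemma rootFilter_card (a : TreeObj n) :
    (a.1.verts.filter fun v => a.1.parent v = none).card = 1 := a.2.2

/-- the root vertex of a tree. -/
def rootV (a : TreeObj n) : ℕ :=
  (a.1.verts.filter fun v => a.1.parent v = none).min'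
    (Finset.card_pos.mp (by rw [rootFilter_card a]; exact Nat.one_pos))

lemma rootV_spec (a : TreeObj n) :
    rootV a ∈ a.1.verts ∧ a.1.parent (rootV a) = none := by
  have h := Finset.min'_mem (a.1.verts.filter fun v => a.1.parent v = none)
    (Finset.card_pos.mp (by rw [rootFilter_card a]; exact Nat.one_pos))
  exact Finset.mem_filter.mp h

lemma rootV_unique (a : TreeObj n) {x : ℕ} (hx : x ∈ a.1.verts)
    (hp : a.1.parent x = none) : x = rootV a := by
  obtain ⟨y, hy⟩ := Finset.card_eq_one.mp (rootFilter_card a)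
  have h1 : x ∈ a.1.verts.filter fun v => a.1.parent v = none :=
    Finset.mem_filter.mpr ⟨hx, hp⟩
  have h2 : rootV a ∈ a.1.verts.filter fun v => a.1.parent v = none :=
    Finset.mem_filter.mpr ⟨(rootV_spec a).1, (rootV_spec a).2⟩
  rw [hy, Finset.mem_singleton] at h1 h2
  rw [h1, h2]

/-! #### toLabeled -/

lemma toLabeled_wf {t : PForest n} (h : t.WF ∧ t.IsTree) (i : Fin n) :
    (toLabeled t i).WF ∧ (toLabeled t i).IsTree := h

lemma toLabeled_piso (t : PForest n) (i : Fin n) : PIso (toLabeled t i) t := by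
  refine ⟨Equiv.refl _, fun v w => Iff.rfl, fun v hv => ?_⟩
  have hv' : (t.parent (v : ℕ)).isSome := hv
  show t.color (v : ℕ) = (if t.parent (v : ℕ) = none then i else t.color (v : ℕ))
  rw [if_neg (Option.ne_none_iff_isSome.mpr hv')]

lemma toLabeled_liso_of_piso {s t : PForest n} (hs : s.WF) (ht : t.WF)
    (h : PIso s t) (i : Fin n) : LIso (toLabeled s i) (toLabeled t i) := by
  obtain ⟨e, h1, h2⟩ := h
  refine ⟨e, h1, fun v => ?_⟩
  show (if t.parent ((e v : ℕ)) = none then i else t.color ((e v : ℕ))) =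
    (if s.parent ((v : ℕ)) = none then i else s.color ((v : ℕ)))
  by_cases hr : s.parent (v : ℕ) = none
  · rw [if_pos hr, if_pos ((root_map hs ht h1 v).mp hr)]
  · rw [if_neg hr, if_neg (fun hc => hr ((root_map hs ht h1 v).mpr hc))]
    exact h2 v (Option.ne_none_iff_isSome.mp hr)

/-! #### forget and rootLabel -/

lemma piso_of_liso {s t : PForest n} (h : LIso s t) : PIso s t := by
  obtain ⟨e, h1, h2⟩ := h; exact ⟨e, h1, fun v _ => h2 v⟩

/-- forgetting the vertex labels (reading them as edge colors). -/
def forgetC : LTreeClass n → TreeClass n :=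
  Quot.lift (fun a => Quot.mk _ a) (fun _ _ h => Quot.sound (piso_of_liso h))

/-- the label of the root of a labeled tree. -/
def rootLabelObj (a : TreeObj n) : Fin n := a.1.color (rootV a)

lemma rootLabelObj_liso {a b : TreeObj n} (h : LIso a.1 b.1) :
    rootLabelObj a = rootLabelObj b := by
  obtain ⟨e, h1, h2⟩ := h
  have hra := rootV_spec a
  have key : ((e ⟨rootV a, hra.1⟩ : ℕ)) = rootV b := by
    apply rootV_unique b (e ⟨rootV a, hra.1⟩).2
    exact (root_map a.2.1 b.2.1 h1 ⟨rootV a, hra.1⟩).mp hra.2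
  rw [rootLabelObj, rootLabelObj, ← key]
  exact (h2 ⟨rootV a, hra.1⟩).symm

def rootLabel : LTreeClass n → Fin n :=
  Quot.lift rootLabelObj (fun _ _ h => rootLabelObj_liso h)

/-- a left inverse of ψ. -/
def piMap : (LTreeClass n →₀ K) →ₗ[K] (TreeClass n →₀ K) :=
  Finsupp.lsum K fun c => LinearMap.toSpanSingleton K _
    (if rootLabel c = 0 then Finsupp.single (forgetC c) (1 : K) else 0)

lemma rootLabel_mkClassL_toLabeled {t : PForest n} (h : t.WF ∧ t.IsTree) (i : Fin n) :
    rootLabel (mkClassL (toLabeled t i)) = i := by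
  rw [mkClassL_eq_mk (toLabeled_wf h i)]
  show rootLabelObj (⟨toLabeled t i, toLabeled_wf h i⟩ : TreeObj n) = i
  have hr : t.parent (rootV (⟨toLabeled t i, toLabeled_wf h i⟩ : TreeObj n)) = none :=
    (rootV_spec (⟨toLabeled t i, toLabeled_wf h i⟩ : TreeObj n)).2
  show (if t.parent (rootV (⟨toLabeled t i, toLabeled_wf h i⟩ : TreeObj n)) = none
      then i else _) = i
  rw [if_pos hr]

lemma forgetC_mkClassL_toLabeled {t : PForest n} (h : t.WF ∧ t.IsTree) (i : Fin n) :
    forgetC (mkClassL (toLabeled t i)) = mkClass t := by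
  rw [mkClassL_eq_mk (toLabeled_wf h i), mkClass_eq_mk h]
  exact Quot.sound (toLabeled_piso t i)

lemma psi_single (T : TreeClass n) (c : K) :
    psi K (Finsupp.single T c) =
      c • ∑ i : Fin n, Finsupp.single (mkClassL (toLabeled (Quot.out T).1 i)) (1 : K) := by
  rw [psi, Finsupp.lsum_single, LinearMap.toSpanSingleton_apply]

lemma piMap_psi : (piMap K).comp (psi K (n := n)) = LinearMap.id := by
  apply Finsupp.lhom_ext
  intro T c
  simp only [LinearMap.comp_apply, LinearMap.id_apply]
  rw [psi_single, map_smul, map_sum]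
  have step : ∀ i : Fin n,
      piMap K (Finsupp.single (mkClassL (toLabeled (Quot.out T).1 i)) (1 : K)) =
        if i = 0 then Finsupp.single T (1 : K) else 0 := by
    intro i
    rw [piMap, Finsupp.lsum_single, LinearMap.toSpanSingleton_apply, one_smul,
      rootLabel_mkClassL_toLabeled (Quot.out T).2]
    by_cases hi : i = 0
    · rw [if_pos hi, if_pos hi, forgetC_mkClassL_toLabeled (Quot.out T).2, mkClass_out]
    · rw [if_neg hi, if_neg hi]
  rw [Finset.sum_congr rfl (fun i _ => step i), Finset.sum_ite_eq' Finset.univ (0 : Fin n)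
    (fun _ => Finsupp.single T (1 : K)), if_pos (Finset.mem_univ _)]
  rw [Finsupp.smul_single', mul_one]

lemma psi_injective : Function.Injective (psi K (n := n)) :=
  Function.LeftInverse.injective (g := piMap K)
    (fun x => LinearMap.congr_fun (piMap_psi K) x)


/-! #### graft combinatorics -/

lemma graft_verts_eq (s t : PForest n) (v : ℕ) (p : Fin n) :
    (graft s t v p).verts = (graftL s t v).verts := rfl

lemma graft_parent_eq (s t : PForest n) (v : ℕ) (p : Fin n) :
    (graft s t v p).parent = (graftL s t v).parent := rfl

lemma wf_congr {a b : PForest n} (hv : a.verts = b.verts) (hp : a.parent = b.parent) :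
    a.WF ↔ b.WF := by rw [PForest.WF, PForest.WF, hv, hp]

lemma isTree_congr {a b : PForest n} (hv : a.verts = b.verts)
    (hp : a.parent = b.parent) : a.IsTree ↔ b.IsTree := by
  rw [PForest.IsTree, PForest.IsTree, hv, hp]

lemma mem_graftL_verts {s t : PForest n} {v x : ℕ} :
    x ∈ (graftL s t v).verts ↔
      (x % 2 = 0 ∧ x / 2 ∈ t.verts) ∨ (x % 2 = 1 ∧ x / 2 ∈ s.verts) := by
  show x ∈ t.verts.image (fun x => 2 * x) ∪ s.verts.image (fun x => 2 * x + 1) ↔ _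
  simp only [Finset.mem_union, Finset.mem_image]
  constructor
  · rintro (⟨y, hy, rfl⟩ | ⟨y, hy, rfl⟩)
    · refine Or.inl ⟨by omega, ?_⟩
      have : 2 * y / 2 = y := by omega
      rw [this]; exact hy
    · refine Or.inr ⟨by omega, ?_⟩
      have : (2 * y + 1) / 2 = y := by omega
      rw [this]; exact hy
  · rintro (⟨h0, h1⟩ | ⟨h0, h1⟩)
    · exact Or.inl ⟨x / 2, h1, by omega⟩
    · exact Or.inr ⟨x / 2, h1, by omega⟩

lemma even_mem_graftL {s t : PForest n} {v y : ℕ} (hy : y ∈ t.verts) :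
    2 * y ∈ (graftL s t v).verts := by
  refine mem_graftL_verts.mpr (Or.inl ⟨by omega, ?_⟩)
  have : 2 * y / 2 = y := by omega
  rw [this]; exact hy

lemma odd_mem_graftL {s t : PForest n} {v y : ℕ} (hy : y ∈ s.verts) :
    2 * y + 1 ∈ (graftL s t v).verts := by
  refine mem_graftL_verts.mpr (Or.inr ⟨by omega, ?_⟩)
  have : (2 * y + 1) / 2 = y := by omega
  rw [this]; exact hy

lemma graftL_parent_even (s t : PForest n) (v y : ℕ) :
    (graftL s t v).parent (2 * y) = (t.parent y).map fun w => 2 * w := by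
  show (if 2 * y % 2 = 0 then (t.parent (2 * y / 2)).map fun w => 2 * w else _) = _
  have h1 : 2 * y % 2 = 0 := by omega
  have h2 : 2 * y / 2 = y := by omega
  rw [if_pos h1, h2]

lemma graftL_parent_odd (s t : PForest n) (v y : ℕ) :
    (graftL s t v).parent (2 * y + 1) =
      match s.parent y with
      | some w => some (2 * w + 1)
      | none => if y ∈ s.verts then some (2 * v) else none := by
  have h1 : ¬((2 * y + 1) % 2 = 0) := by omega
  have h2 : (2 * y + 1) / 2 = y := by omega
  show (if (2 * y + 1) % 2 = 0 then (t.parent ((2 * y + 1) / 2)).map (fun w => 2 * w) else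
      match s.parent ((2 * y + 1) / 2) with
      | some w => some (2 * w + 1)
      | none => if (2 * y + 1) / 2 ∈ s.verts then some (2 * v) else none) =
    match s.parent y with
    | some w => some (2 * w + 1)
    | none => if y ∈ s.verts then some (2 * v) else none
  rw [if_neg h1, h2]

lemma graftL_color_even (s t : PForest n) (v y : ℕ) :
    (graftL s t v).color (2 * y) = t.color y := by
  have h1 : 2 * y % 2 = 0 := by omega
  have h2 : 2 * y / 2 = y := by omega
  show (if 2 * y % 2 = 0 then t.color (2 * y / 2) else _) = _
  rw [if_pos h1, h2]

lemma graftL_color_odd (s t : PForest n) (v y : ℕ) :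
    (graftL s t v).color (2 * y + 1) = s.color y := by
  have h1 : ¬((2 * y + 1) % 2 = 0) := by omega
  have h2 : (2 * y + 1) / 2 = y := by omega
  show (if (2 * y + 1) % 2 = 0 then _ else s.color ((2 * y + 1) / 2)) = _
  rw [if_neg h1, h2]

lemma graft_color_even (s t : PForest n) (v : ℕ) (p : Fin n) (y : ℕ) :
    (graft s t v p).color (2 * y) = t.color y := by
  have h1 : 2 * y % 2 = 0 := by omega
  have h2 : 2 * y / 2 = y := by omega
  show (if 2 * y % 2 = 0 then t.color (2 * y / 2) else _) = _
  rw [if_pos h1, h2]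

lemma graft_color_odd (s t : PForest n) (v : ℕ) (p : Fin n) (y : ℕ) :
    (graft s t v p).color (2 * y + 1) =
      match s.parent y with
      | some _ => s.color y
      | none => p := by
  have h1 : ¬((2 * y + 1) % 2 = 0) := by omega
  have h2 : (2 * y + 1) / 2 = y := by omega
  show (if (2 * y + 1) % 2 = 0 then t.color ((2 * y + 1) / 2) else
      match s.parent ((2 * y + 1) / 2) with
      | some _ => s.color ((2 * y + 1) / 2)
      | none => p) =
    match s.parent y with
    | some _ => s.color y
    | none => p
  rw [if_neg h1, h2]

lemma graftL_wf {s t : PForest n} (hs : s.WF) (ht : t.WF) {v : ℕ} (hv : v ∈ t.verts) :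
    (graftL s t v).WF := by
  obtain ⟨rks, hrks⟩ := hs.2
  obtain ⟨rkt, hrkt⟩ := ht.2
  constructor
  · intro x u hxu
    obtain ⟨y, rfl | rfl⟩ := Nat.even_or_odd' x
    · rw [graftL_parent_even] at hxu
      obtain ⟨w, hw, rfl⟩ := Option.map_eq_some_iff.mp hxu
      exact ⟨even_mem_graftL (ht.1 _ _ hw).1, even_mem_graftL (ht.1 _ _ hw).2⟩
    · rw [graftL_parent_odd] at hxu
      cases hsy : s.parent y with
      | some w =>
        rw [hsy] at hxu
        obtain rfl : 2 * w + 1 = u := Option.some_injective _ hxu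
        exact ⟨odd_mem_graftL (hs.1 _ _ hsy).1, odd_mem_graftL (hs.1 _ _ hsy).2⟩
      | none =>
        rw [hsy] at hxu
        by_cases hy : y ∈ s.verts
        · rw [if_pos hy] at hxu
          obtain rfl : 2 * v = u := Option.some_injective _ hxu
          exact ⟨odd_mem_graftL hy, even_mem_graftL hv⟩
        · rw [if_neg hy] at hxu; simp at hxu
  · refine ⟨fun x => if x % 2 = 0 then rkt (x / 2) else rks (x / 2) + rkt v + 1, ?_⟩
    intro x u hxu
    obtain ⟨y, rfl | rfl⟩ := Nat.even_or_odd' x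
    · rw [graftL_parent_even] at hxu
      obtain ⟨w, hw, rfl⟩ := Option.map_eq_some_iff.mp hxu
      have h1 : 2 * w % 2 = 0 := by omega
      have h2 : 2 * w / 2 = w := by omega
      have h3 : 2 * y % 2 = 0 := by omega
      have h4 : 2 * y / 2 = y := by omega
      simp only [if_pos h1, if_pos h3, h2, h4]
      exact hrkt _ _ hw
    · rw [graftL_parent_odd] at hxu
      have h3 : ¬((2 * y + 1) % 2 = 0) := by omega
      have h4 : (2 * y + 1) / 2 = y := by omega
      cases hsy : s.parent y with
      | some w =>
        rw [hsy] at hxu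
        obtain rfl : 2 * w + 1 = u := Option.some_injective _ hxu
        have h1 : ¬((2 * w + 1) % 2 = 0) := by omega
        have h2 : (2 * w + 1) / 2 = w := by omega
        simp only [if_neg h1, if_neg h3, h2, h4]
        have := hrks _ _ hsy
        omega
      | none =>
        rw [hsy] at hxu
        by_cases hy : y ∈ s.verts
        · rw [if_pos hy] at hxu
          obtain rfl : 2 * v = u := Option.some_injective _ hxu
          have h1 : 2 * v % 2 = 0 := by omega
          have h2 : 2 * v / 2 = v := by omega
          simp only [if_pos h1, if_neg h3, h2, h4]
          omega
        · rw [if_neg hy] at hxu; simp at hxu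

lemma graftL_isTree {s t : PForest n} (htt : t.IsTree) {v : ℕ} :
    (graftL s t v).IsTree := by
  have key : ((graftL s t v).verts.filter fun x => (graftL s t v).parent x = none) =
      (t.verts.filter fun y => t.parent y = none).image (fun y => 2 * y) := by
    ext x
    simp only [Finset.mem_filter, Finset.mem_image]
    constructor
    · rintro ⟨hx, hpx⟩
      rcases mem_graftL_verts.mp hx with ⟨h0, h1⟩ | ⟨h0, h1⟩
      · refine ⟨x / 2, ⟨h1, ?_⟩, by omega⟩
        have hx2 : x = 2 * (x / 2) := by omega
        rw [hx2, graftL_parent_even] at hpx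
        exact Option.map_eq_none_iff.mp hpx
      · exfalso
        have hx2 : x = 2 * (x / 2) + 1 := by omega
        rw [hx2, graftL_parent_odd] at hpx
        cases hsy : s.parent (x / 2) with
        | some w => rw [hsy] at hpx; simp at hpx
        | none => rw [hsy, if_pos h1] at hpx; simp at hpx
    · rintro ⟨y, ⟨hy, hpy⟩, rfl⟩
      refine ⟨even_mem_graftL hy, ?_⟩
      rw [graftL_parent_even, hpy]; rfl
  show ((graftL s t v).verts.filter fun x => (graftL s t v).parent x = none).card = 1
  rw [key, Finset.card_image_of_injective _ (fun a b h => by omega)]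
  exact htt

lemma graft_wf {s t : PForest n} (hs : s.WF) (ht : t.WF) {v : ℕ} (hv : v ∈ t.verts)
    (p : Fin n) : (graft s t v p).WF :=
  (wf_congr (graft_verts_eq s t v p) (graft_parent_eq s t v p)).mpr (graftL_wf hs ht hv)

lemma graft_isTree {s t : PForest n} (htt : t.IsTree) {v : ℕ} (p : Fin n) :
    (graft s t v p).IsTree :=
  (isTree_congr (graft_verts_eq s t v p) (graft_parent_eq s t v p)).mpr
    (graftL_isTree htt)


/-! #### characterization of edges of a graft -/

lemma graftL_parent_even_even {s t : PForest n} {v a b : ℕ} :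
    (graftL s t v).parent (2 * a) = some (2 * b) ↔ t.parent a = some b := by
  rw [graftL_parent_even]
  constructor
  · intro h
    obtain ⟨w, hw, hw2⟩ := Option.map_eq_some_iff.mp h
    obtain rfl : w = b := by omega
    exact hw
  · intro h; rw [h]; rfl

lemma graftL_parent_even_odd {s t : PForest n} {v a b : ℕ} :
    ¬((graftL s t v).parent (2 * a) = some (2 * b + 1)) := by
  rw [graftL_parent_even]
  intro h
  obtain ⟨w, _, hw2⟩ := Option.map_eq_some_iff.mp h
  omega

lemma graftL_parent_odd_odd {s t : PForest n} {v a b : ℕ} (ha : a ∈ s.verts) :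
    (graftL s t v).parent (2 * a + 1) = some (2 * b + 1) ↔ s.parent a = some b := by
  rw [graftL_parent_odd]
  cases hsa : s.parent a with
  | some w =>
    constructor
    · intro h
      obtain rfl : w = b := by
        have := Option.some_injective _ h; omega
      rfl
    · intro h
      obtain rfl : w = b := by
        have := Option.some_injective _ h; omega
      rfl
  | none =>
    rw [if_pos ha]
    constructor
    · intro h; have := Option.some_injective _ h; omega
    · intro h; simp at h

lemma graftL_parent_odd_even {s t : PForest n} {v a b : ℕ} (ha : a ∈ s.verts) :
    (graftL s t v).parent (2 * a + 1) = some (2 * b) ↔ s.parent a = none ∧ b = v := by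
  rw [graftL_parent_odd]
  cases hsa : s.parent a with
  | some w =>
    constructor
    · intro h; have := Option.some_injective _ h; omega
    · rintro ⟨h, -⟩; simp at h
  | none =>
    rw [if_pos ha]
    constructor
    · intro h
      have := Option.some_injective _ h
      exact ⟨rfl, by omega⟩
    · rintro ⟨-, rfl⟩; rfl

/-! #### the decomposition of the vertices of a graft -/

def gdFun (s t : PForest n) (v : ℕ) (x : {x // x ∈ (graftL s t v).verts}) :
    {y // y ∈ t.verts} ⊕ {y // y ∈ s.verts} :=
  if h : (x : ℕ) % 2 = 0 then
    Sum.inl ⟨(x : ℕ) / 2,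
      (((mem_graftL_verts.mp x.2).resolve_right (fun hc => by have := hc.1; omega)).2)⟩
  else
    Sum.inr ⟨(x : ℕ) / 2,
      (((mem_graftL_verts.mp x.2).resolve_left (fun hc => by have := hc.1; omega)).2)⟩

def gdInv (s t : PForest n) (v : ℕ) (y : {y // y ∈ t.verts} ⊕ {y // y ∈ s.verts}) :
    {x // x ∈ (graftL s t v).verts} :=
  match y with
  | Sum.inl a => ⟨2 * (a : ℕ), even_mem_graftL a.2⟩
  | Sum.inr b => ⟨2 * (b : ℕ) + 1, odd_mem_graftL b.2⟩

/-- decomposition of the vertex set of a graft into the two pieces. -/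
def graftDecomp (s t : PForest n) (v : ℕ) :
    {x // x ∈ (graftL s t v).verts} ≃ ({y // y ∈ t.verts} ⊕ {y // y ∈ s.verts}) where
  toFun := gdFun s t v
  invFun := gdInv s t v
  left_inv x := by
    obtain ⟨x, hx⟩ := x
    by_cases h : x % 2 = 0
    · show gdInv s t v (gdFun s t v ⟨x, hx⟩) = ⟨x, hx⟩
      rw [gdFun, dif_pos h]
      exact Subtype.ext (by show 2 * (x / 2) = x; omega)
    · show gdInv s t v (gdFun s t v ⟨x, hx⟩) = ⟨x, hx⟩
      rw [gdFun, dif_neg h]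
      exact Subtype.ext (by show 2 * (x / 2) + 1 = x; omega)
  right_inv y := by
    rcases y with a | b
    · show gdFun s t v ⟨2 * (a : ℕ), _⟩ = Sum.inl a
      rw [gdFun, dif_pos (by omega : (2 * (a : ℕ)) % 2 = 0)]
      exact congrArg Sum.inl (Subtype.ext (by show 2 * (a : ℕ) / 2 = (a : ℕ); omega))
    · show gdFun s t v ⟨2 * (b : ℕ) + 1, _⟩ = Sum.inr b
      rw [gdFun, dif_neg (by omega : ¬((2 * (b : ℕ) + 1) % 2 = 0))]
      exact congrArg Sum.inr (Subtype.ext (by show (2 * (b : ℕ) + 1) / 2 = (b : ℕ); omega))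

lemma graftDecomp_symm_inl {s t : PForest n} {v : ℕ} (a : {y // y ∈ t.verts}) :
    (((graftDecomp s t v).symm (Sum.inl a) : {x // x ∈ (graftL s t v).verts}) : ℕ) =
      2 * (a : ℕ) := rfl

lemma graftDecomp_symm_inr {s t : PForest n} {v : ℕ} (b : {y // y ∈ s.verts}) :
    (((graftDecomp s t v).symm (Sum.inr b) : {x // x ∈ (graftL s t v).verts}) : ℕ) =
      2 * (b : ℕ) + 1 := rfl

lemma graftDecomp_even {s t : PForest n} {v : ℕ} {a : ℕ} (ha : a ∈ t.verts)
    (hm : 2 * a ∈ (graftL s t v).verts) :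
    graftDecomp s t v ⟨2 * a, hm⟩ = Sum.inl ⟨a, ha⟩ := by
  show gdFun s t v ⟨2 * a, hm⟩ = Sum.inl ⟨a, ha⟩
  rw [gdFun, dif_pos (by omega : (2 * a) % 2 = 0)]
  exact congrArg Sum.inl (Subtype.ext (by show 2 * a / 2 = a; omega))

lemma graftDecomp_odd {s t : PForest n} {v : ℕ} {a : ℕ} (ha : a ∈ s.verts)
    (hm : 2 * a + 1 ∈ (graftL s t v).verts) :
    graftDecomp s t v ⟨2 * a + 1, hm⟩ = Sum.inr ⟨a, ha⟩ := by
  show gdFun s t v ⟨2 * a + 1, hm⟩ = Sum.inr ⟨a, ha⟩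
  rw [gdFun, dif_neg (by omega : ¬((2 * a + 1) % 2 = 0))]
  exact congrArg Sum.inr (Subtype.ext (by show (2 * a + 1) / 2 = a; omega))

lemma mem_t_of_even {s t : PForest n} {v a : ℕ} (hx : 2 * a ∈ (graftL s t v).verts) :
    a ∈ t.verts := by
  have h := ((mem_graftL_verts.mp hx).resolve_right (fun hc => by omega)).2
  have h2 : 2 * a / 2 = a := by omega
  rwa [h2] at h

lemma mem_s_of_odd {s t : PForest n} {v a : ℕ} (hx : 2 * a + 1 ∈ (graftL s t v).verts) :
    a ∈ s.verts := by
  have h := ((mem_graftL_verts.mp hx).resolve_left (fun hc => by omega)).2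
  have h2 : (2 * a + 1) / 2 = a := by omega
  rwa [h2] at h

/-! #### invariance of grafting under isomorphism -/

lemma graftL_liso {s s' t t' : PForest n} (hs : s.WF) (hs' : s'.WF)
    {es : {x // x ∈ s.verts} ≃ {x // x ∈ s'.verts}} (hes : LIsoFn s s' es)
    {et : {x // x ∈ t.verts} ≃ {x // x ∈ t'.verts}} (het : LIsoFn t t' et)
    {v : ℕ} (hv : v ∈ t.verts) :
    LIso (graftL s t v) (graftL s' t' ((et ⟨v, hv⟩ : ℕ))) := by
  set v' : ℕ := (et ⟨v, hv⟩ : ℕ) with hv'def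
  let E : {x // x ∈ (graftL s t v).verts} ≃ {x // x ∈ (graftL s' t' v').verts} :=
    (graftDecomp s t v).trans ((Equiv.sumCongr et es).trans (graftDecomp s' t' v').symm)
  have Eeven : ∀ (a : ℕ) (ha : a ∈ t.verts) (hm : 2 * a ∈ (graftL s t v).verts),
      ((E ⟨2 * a, hm⟩ : ℕ)) = 2 * ((et ⟨a, ha⟩ : ℕ)) := by
    intro a ha hm
    show (((graftDecomp s' t' v').symm
      ((Equiv.sumCongr et es) (graftDecomp s t v ⟨2 * a, hm⟩)) : {x // x ∈ _}) : ℕ) = _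
    rw [graftDecomp_even ha hm]
    exact graftDecomp_symm_inl _
  have Eodd : ∀ (a : ℕ) (ha : a ∈ s.verts) (hm : 2 * a + 1 ∈ (graftL s t v).verts),
      ((E ⟨2 * a + 1, hm⟩ : ℕ)) = 2 * ((es ⟨a, ha⟩ : ℕ)) + 1 := by
    intro a ha hm
    show (((graftDecomp s' t' v').symm
      ((Equiv.sumCongr et es) (graftDecomp s t v ⟨2 * a + 1, hm⟩)) : {x // x ∈ _}) : ℕ) = _
    rw [graftDecomp_odd ha hm]
    exact graftDecomp_symm_inr _
  refine ⟨E, ?_, ?_⟩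
  · rintro ⟨x, hx⟩ ⟨w, hw⟩
    obtain ⟨a, rfl | rfl⟩ := Nat.even_or_odd' x <;> obtain ⟨b, rfl | rfl⟩ := Nat.even_or_odd' w
    · have ha : a ∈ t.verts := mem_t_of_even hx
      have hb : b ∈ t.verts := mem_t_of_even hw
      show (graftL s t v).parent (2 * a) = some (2 * b) ↔
        (graftL s' t' v').parent ((E ⟨2 * a, hx⟩ : ℕ)) = some ((E ⟨2 * b, hw⟩ : ℕ))
      rw [Eeven a ha, Eeven b hb, graftL_parent_even_even, graftL_parent_even_even]
      exact het.1 ⟨a, ha⟩ ⟨b, hb⟩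
    · have ha : a ∈ t.verts := mem_t_of_even hx
      have hb : b ∈ s.verts := mem_s_of_odd hw
      show (graftL s t v).parent (2 * a) = some (2 * b + 1) ↔
        (graftL s' t' v').parent ((E ⟨2 * a, hx⟩ : ℕ)) = some ((E ⟨2 * b + 1, hw⟩ : ℕ))
      rw [Eeven a ha, Eodd b hb]
      exact iff_of_false graftL_parent_even_odd graftL_parent_even_odd
    · have ha : a ∈ s.verts := mem_s_of_odd hx
      have hb : b ∈ t.verts := mem_t_of_even hw
      show (graftL s t v).parent (2 * a + 1) = some (2 * b) ↔
        (graftL s' t' v').parent ((E ⟨2 * a + 1, hx⟩ : ℕ)) = some ((E ⟨2 * b, hw⟩ : ℕ))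
      rw [Eeven b hb, Eodd a ha, graftL_parent_odd_even ha,
        graftL_parent_odd_even (es ⟨a, ha⟩).2]
      constructor
      · rintro ⟨h1, rfl⟩
        exact ⟨(root_map hs hs' hes.1 ⟨a, ha⟩).mp h1, rfl⟩
      · rintro ⟨h1, h2⟩
        refine ⟨(root_map hs hs' hes.1 ⟨a, ha⟩).mpr h1, ?_⟩
        have := et.injective (Subtype.ext h2)
        exact congrArg Subtype.val this
    · have ha : a ∈ s.verts := mem_s_of_odd hx
      have hb : b ∈ s.verts := mem_s_of_odd hw
      show (graftL s t v).parent (2 * a + 1) = some (2 * b + 1) ↔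
        (graftL s' t' v').parent ((E ⟨2 * a + 1, hx⟩ : ℕ)) = some ((E ⟨2 * b + 1, hw⟩ : ℕ))
      rw [Eodd a ha, Eodd b hb, graftL_parent_odd_odd ha, graftL_parent_odd_odd (es ⟨a, ha⟩).2]
      exact hes.1 ⟨a, ha⟩ ⟨b, hb⟩
  · rintro ⟨x, hx⟩
    obtain ⟨a, rfl | rfl⟩ := Nat.even_or_odd' x
    · have ha : a ∈ t.verts := mem_t_of_even hx
      show (graftL s' t' v').color ((E ⟨2 * a, hx⟩ : ℕ)) = (graftL s t v).color (2 * a)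
      rw [Eeven a ha, graftL_color_even, graftL_color_even]
      exact het.2 ⟨a, ha⟩
    · have ha : a ∈ s.verts := mem_s_of_odd hx
      show (graftL s' t' v').color ((E ⟨2 * a + 1, hx⟩ : ℕ)) = (graftL s t v).color (2 * a + 1)
      rw [Eodd a ha, graftL_color_odd, graftL_color_odd]
      exact hes.2 ⟨a, ha⟩


/-! #### grafting commutes with relabeling -/

lemma toLabeled_graft {s t : PForest n} (hs : s.WF ∧ s.IsTree) (ht : t.WF ∧ t.IsTree)
    {v : ℕ} (hv : v ∈ t.verts) (p i : Fin n) :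
    mkClassL (toLabeled (graft s t v p) i) =
      mkClassL (graftL (toLabeled s p) (toLabeled t i) v) := by
  have hg : (graft s t v p).WF ∧ (graft s t v p).IsTree :=
    ⟨graft_wf hs.1 ht.1 hv p, graft_isTree ht.2 p⟩
  have hg2 : (graftL (toLabeled s p) (toLabeled t i) v).WF ∧
      (graftL (toLabeled s p) (toLabeled t i) v).IsTree :=
    ⟨graftL_wf hs.1 ht.1 hv, graftL_isTree ht.2⟩
  apply mkClassL_eq_of_liso (toLabeled_wf hg i) hg2
  refine ⟨Equiv.refl _, fun x w => Iff.rfl, ?_⟩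
  rintro ⟨x, hx⟩
  have hx' : x ∈ (graftL s t v).verts := hx
  obtain ⟨a, rfl | rfl⟩ := Nat.even_or_odd' x
  · have ha : a ∈ t.verts := mem_t_of_even hx'
    show (graftL (toLabeled s p) (toLabeled t i) v).color (2 * a) =
      (toLabeled (graft s t v p) i).color (2 * a)
    rw [graftL_color_even]
    show (if t.parent a = none then i else t.color a) =
      (if (graft s t v p).parent (2 * a) = none then i
        else (graft s t v p).color (2 * a))
    rw [graft_parent_eq, graftL_parent_even, graft_color_even]
    cases hpa : t.parent a <;> simp [hpa]
  · have ha : a ∈ s.verts := mem_s_of_odd hx'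
    show (graftL (toLabeled s p) (toLabeled t i) v).color (2 * a + 1) =
      (toLabeled (graft s t v p) i).color (2 * a + 1)
    rw [graftL_color_odd]
    show (if s.parent a = none then p else s.color a) =
      (if (graft s t v p).parent (2 * a + 1) = none then i
        else (graft s t v p).color (2 * a + 1))
    rw [graft_parent_eq, graftL_parent_odd, graft_color_odd]
    cases hpa : s.parent a <;> simp [hpa, ha]

/-! #### the single-single computations -/

lemma starM_single (S T : LTreeClass n) :
    starM K (Finsupp.single S (1 : K)) (Finsupp.single T (1 : K)) = graftSumL K S T := by
  rw [starM, Finsupp.lsum_single, LinearMap.toSpanSingleton_apply, one_smul,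
    Finsupp.lsum_single, LinearMap.toSpanSingleton_apply, one_smul]

lemma grmul_single (S T : TreeClass n) :
    grmul K (Finsupp.single S (1 : K)) (Finsupp.single T (1 : K)) = graftSum K S T := by
  rw [grmul, Finsupp.lsum_single, LinearMap.toSpanSingleton_apply, one_smul,
    Finsupp.lsum_single, LinearMap.toSpanSingleton_apply, one_smul]

lemma graftSumL_eq {s t : PForest n} (hs : s.WF ∧ s.IsTree) (ht : t.WF ∧ t.IsTree)
    (p i : Fin n) :
    graftSumL K (mkClassL (toLabeled s p)) (mkClassL (toLabeled t i)) =
      ∑ v ∈ t.verts,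
        Finsupp.single (mkClassL (graftL (toLabeled s p) (toLabeled t i) v)) (1 : K) := by
  obtain ⟨es, hes⟩ := liso_symm (out_mkClassL (toLabeled_wf hs p))
  obtain ⟨et, het⟩ := liso_symm (out_mkClassL (toLabeled_wf ht i))
  have hA := (Quot.out (mkClassL (toLabeled s p))).2
  have hB := (Quot.out (mkClassL (toLabeled t i))).2
  show ∑ w ∈ (Quot.out (mkClassL (toLabeled t i))).1.verts,
      Finsupp.single (mkClassL (graftL (Quot.out (mkClassL (toLabeled s p))).1
        (Quot.out (mkClassL (toLabeled t i))).1 w)) (1 : K) = _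
  symm
  refine Finset.sum_bij' (fun v hv => ((et ⟨v, hv⟩ : ℕ)))
    (fun w hw => ((et.symm ⟨w, hw⟩ : ℕ))) ?_ ?_ ?_ ?_ ?_
  · intro v hv; exact (et ⟨v, hv⟩).2
  · intro w hw; exact (et.symm ⟨w, hw⟩).2
  · intro v hv
    have : et.symm (et ⟨v, hv⟩) = ⟨v, hv⟩ := et.symm_apply_apply _
    exact congrArg Subtype.val this
  · intro w hw
    have : et (et.symm ⟨w, hw⟩) = ⟨w, hw⟩ := et.apply_symm_apply _
    exact congrArg Subtype.val this
  · intro v hv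
    refine congrArg (fun c => Finsupp.single c (1 : K)) ?_
    exact mkClassL_eq_of_liso
      ⟨graftL_wf hs.1 ht.1 hv, graftL_isTree ht.2⟩
      ⟨graftL_wf hA.1 hB.1 (et ⟨v, hv⟩).2, graftL_isTree hB.2⟩
      (graftL_liso (s := toLabeled s p) (t := toLabeled t i) hs.1 hA.1 hes het hv)

lemma psi_graftSum (S T : TreeClass n) :
    psi K (graftSum K S T) =
      starM K (psi K (Finsupp.single S (1 : K))) (psi K (Finsupp.single T (1 : K))) := by
  have hs := (Quot.out S).2
  have ht := (Quot.out T).2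
  have LHS : psi K (graftSum K S T) =
      ∑ v ∈ (Quot.out T).1.verts, ∑ p : Fin n, ∑ i : Fin n,
        Finsupp.single (mkClassL (graftL (toLabeled (Quot.out S).1 p)
          (toLabeled (Quot.out T).1 i) v)) (1 : K) := by
    rw [graftSum, map_sum]
    refine Finset.sum_congr rfl fun v hv => ?_
    rw [map_sum]
    refine Finset.sum_congr rfl fun p _ => ?_
    rw [psi_single, one_smul]
    refine Finset.sum_congr rfl fun i _ => ?_
    refine congrArg (fun c => Finsupp.single c (1 : K)) ?_
    have hg : (graft (Quot.out S).1 (Quot.out T).1 v p).WF ∧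
        (graft (Quot.out S).1 (Quot.out T).1 v p).IsTree :=
      ⟨graft_wf hs.1 ht.1 hv p, graft_isTree ht.2 p⟩
    have h1 : mkClassL (toLabeled
          (Quot.out (mkClass (graft (Quot.out S).1 (Quot.out T).1 v p))).1 i) =
        mkClassL (toLabeled (graft (Quot.out S).1 (Quot.out T).1 v p) i) :=
      mkClassL_eq_of_liso
        (toLabeled_wf (Quot.out (mkClass (graft (Quot.out S).1 (Quot.out T).1 v p))).2 i)
        (toLabeled_wf hg i)
        (toLabeled_liso_of_piso
          (Quot.out (mkClass (graft (Quot.out S).1 (Quot.out T).1 v p))).2.1 hg.1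
          (out_mkClass hg) i)
    rw [h1, toLabeled_graft hs ht hv p i]
  have RHS : starM K (psi K (Finsupp.single S (1 : K))) (psi K (Finsupp.single T (1 : K))) =
      ∑ p : Fin n, ∑ i : Fin n, ∑ v ∈ (Quot.out T).1.verts,
        Finsupp.single (mkClassL (graftL (toLabeled (Quot.out S).1 p)
          (toLabeled (Quot.out T).1 i) v)) (1 : K) := by
    rw [psi_single, one_smul, psi_single, one_smul, map_sum]
    have step : ∀ x : Fin n,
        starM K (∑ p : Fin n,
            Finsupp.single (mkClassL (toLabeled (Quot.out S).1 p)) (1 : K))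
          (Finsupp.single (mkClassL (toLabeled (Quot.out T).1 x)) (1 : K)) =
        ∑ p : Fin n, ∑ v ∈ (Quot.out T).1.verts,
          Finsupp.single (mkClassL (graftL (toLabeled (Quot.out S).1 p)
            (toLabeled (Quot.out T).1 x) v)) (1 : K) := by
      intro x
      rw [map_sum, LinearMap.sum_apply]
      exact Finset.sum_congr rfl fun p _ => by
        rw [starM_single, graftSumL_eq K hs ht p x]
    rw [Finset.sum_congr rfl fun x _ => step x, Finset.sum_comm]
  rw [LHS, RHS, Finset.sum_comm]
  exact Finset.sum_congr rfl fun p _ => Finset.sum_comm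

lemma psi_mul (x y : TreeClass n →₀ K) :
    psi K (grmul K x y) = starM K (psi K x) (psi K y) := by
  induction x using Finsupp.induction_linear with
  | zero => simp
  | add f g hf hg => simp only [map_add, LinearMap.add_apply, hf, hg]
  | single S a =>
    induction y using Finsupp.induction_linear with
    | zero => simp
    | add f g hf hg => simp only [map_add, LinearMap.map_add, hf, hg]
    | single T b =>
      have hS : Finsupp.single S a = a • Finsupp.single S (1 : K) := by
        rw [Finsupp.smul_single', mul_one]
      have hT : Finsupp.single T b = b • Finsupp.single T (1 : K) := by
        rw [Finsupp.smul_single', mul_one]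
      rw [hS, hT]
      simp only [map_smul, LinearMap.smul_apply, map_smul]
      rw [grmul_single, psi_graftSum]

end PsiAux

theorem psi_preLie_embedding (K : Type*) [Field K] (n : ℕ) [NeZero n] :
    Function.Injective (psi K (n := n)) ∧
    (∀ x y : TreeClass n →₀ K,
        psi K (grmul K x y) = starM K (psi K x) (psi K y)) ∧
    LinearMap.range (psi K (n := n)) =
      Submodule.span K
        {m : LTreeClass n →₀ K | ∃ a : TreeObj n,
          m = ∑ i : Fin n, Finsupp.single (mkClassL (toLabeled a.1 i)) (1 : K)} := by
  refine ⟨psi_injective K, fun x y => psi_mul K x y, ?_⟩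
  apply le_antisymm
  · rintro m ⟨x, rfl⟩
    induction x using Finsupp.induction_linear with
    | zero => simp
    | add f g hf hg => rw [map_add]; exact Submodule.add_mem _ hf hg
    | single T c =>
      rw [psi_single]
      exact Submodule.smul_mem _ _ (Submodule.subset_span ⟨Quot.out T, rfl⟩)
  · rw [Submodule.span_le]
    rintro m ⟨a, rfl⟩
    refine ⟨Finsupp.single (Quot.mk _ a : TreeClass n) (1 : K), ?_⟩
    refine (psi_single K _ _).trans ((one_smul K _).trans ?_)
    refine Finset.sum_congr rfl fun i _ => ?_
    refine congrArg (fun c => Finsupp.single c (1 : K)) ?_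
    exact mkClassL_eq_of_liso (toLabeled_wf (Quot.out (Quot.mk _ a : TreeClass n)).2 i)
      (toLabeled_wf a.2 i)
      (toLabeled_liso_of_piso (Quot.out (Quot.mk _ a : TreeClass n)).2.1 a.2.1
        (out_mk_piso a) i)

end
end

section
/- On k[Y_∞], the k-linear span of planar binary trees, define the pruning operator P : k[Y_∞] → k[Y_∞] ⊗ k[Y_∞] on basis trees by P(λ(T,1)) = 0 and P(λ(T,S)) = Σ_i λ(T, S_i') ⊗ S_i'' + λ(T,1) ⊗ S for S ≠ 1, where P(S) = Σ_i S_i' ⊗ S_i''. Define Δ^P : k[Y_∞] → k[Y_∞] ⊗ k[Y_∞] by Δ^P(1) = 1 ⊗ 1 and Δ^P(T) = 1 ⊗ T + P(T) + T ⊗ 1 for every planar binary tree T ≠ 1, and ε : k[Y_∞] → k by ε(1) = 1 and ε(T) = 0 for T ≠ 1. Then (k[Y_∞], Δ^P, ε) is a counital coassociative coalgebra: (Δ^P ⊗ id) ∘ Δ^P = (id ⊗ Δ^P) ∘ Δ^P and (ε ⊗ id) ∘ Δ^P = id = (id ⊗ ε) ∘ Δ^P. Consequently, the free unital associative algebra T(k[Y_∞])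 on the pointed vector space k[Y_∞], with Δ^P extended to an algebra homomorphism, is a bialgebra (the Brouder–Frabetti pruning Hopf algebra). -/
/- STATEMENT 11: the Brouder–Frabetti pruning coproduct on planar binary
trees is coassociative and counital, and extends to a bialgebra structure
on the free unital associative algebra on the pointed vector space
`k[Y_∞]` (identifying the basepoint `1` with the algebra unit). -/

inductive BTree : Type
  | leaf : BTree
  | node : BTree → BTree → BTree
  deriving DecidableEq

noncomputable section

open Finsupp TensorProduct

variable {K : Type*} [Field K]

/-- The pruning operator, on basis trees:
`P(λ(T,1)) = 0`, `P(λ(T,S)) = Σᵢ λ(T,Sᵢ') ⊗ Sᵢ'' + λ(T,1) ⊗ S` for `S ≠ 1`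
(values in the free vector space on pairs of trees, representing the
tensor square). -/
def prune : BTree → ((BTree × BTree) →₀ K)
  | .leaf => 0
  | .node _ .leaf => 0
  | .node T (.node S₁ S₂) =>
      ((prune (BTree.node S₁ S₂)).sum fun p c =>
        Finsupp.single (BTree.node T p.1, p.2) c)
        + Finsupp.single (BTree.node T BTree.leaf, BTree.node S₁ S₂) 1

/-- the pruning coproduct: `Δᴾ(1) = 1 ⊗ 1`,
`Δᴾ(T) = 1 ⊗ T + P(T) + T ⊗ 1` for `T ≠ 1`. -/
def deltaP (t : BTree) : (BTree × BTree) →₀ K :=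
  if t = BTree.leaf then Finsupp.single (BTree.leaf, BTree.leaf) 1
  else Finsupp.single (BTree.leaf, t) 1 + prune t + Finsupp.single (t, BTree.leaf) 1

/-- `Δᴾ ⊗ id` on the tensor square (free vector space on triples). -/
def expandL (x : (BTree × BTree) →₀ K) : (BTree × BTree × BTree) →₀ K :=
  x.sum fun p c => (deltaP p.1).sum fun q d => Finsupp.single (q.1, q.2, p.2) (c * d)

/-- `id ⊗ Δᴾ` on the tensor square. -/
def expandR (x : (BTree × BTree) →₀ K) : (BTree × BTree × BTree) →₀ K :=
  x.sum fun p c => (deltaP p.2).sum fun q d => Finsupp.single (p.1, q.1, q.2) (c * d)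

def eps (t : BTree) : K := if t = BTree.leaf then 1 else 0

/-- the free unital associative algebra on the pointed vector space
`k[Y_∞]`: the tensor algebra on the span of non-leaf trees, the
basepoint (single-leaf tree) being identified with the unit. -/
abbrev TA (K : Type*) [Field K] : Type _ :=
  TensorAlgebra K ({t : BTree // t ≠ BTree.leaf} →₀ K)

/-- a planar binary tree, as an element of `T(k[Y_∞])`. -/
def emb (t : BTree) : TA K :=
  if h : t = BTree.leaf then 1
  else TensorAlgebra.ι K (Finsupp.single (⟨t, h⟩ : {t : BTree // t ≠ BTree.leaf}) (1 : K))

/-- image of a formal sum of pairs of trees in `T(k[Y_∞]) ⊗ T(k[Y_∞])`. -/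
def img (x : (BTree × BTree) →₀ K) : TA K ⊗[K] TA K :=
  x.sum fun p c => c • (emb p.1 ⊗ₜ[K] emb p.2)

namespace Aux

/-- reduced (right-cut) coproduct `D t = 1 ⊗ t + P t` (`0` on the leaf). -/
def D : BTree → ((BTree × BTree) →₀ K)
  | .leaf => 0
  | .node T S =>
      Finsupp.single (BTree.leaf, BTree.node T S) 1
        + Finsupp.mapDomain (fun p => (BTree.node T p.1, p.2)) (D S)

lemma sum_single_eq_mapDomain (x : (BTree × BTree) →₀ K)
    (f : BTree × BTree → α) :
    (x.sum fun p c => Finsupp.single (f p) c) = Finsupp.mapDomain f x := rfl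

lemma prune_node : ∀ (S T : BTree), prune (K := K) (BTree.node T S)
    = Finsupp.mapDomain (fun p => (BTree.node T p.1, p.2)) (D S)
  | .leaf, T => by simp [prune, D]
  | .node S₁ S₂, T => by
      have h := prune_node S₂ S₁
      show ((prune (BTree.node S₁ S₂) : (BTree × BTree) →₀ K).sum fun p c =>
          Finsupp.single (BTree.node T p.1, p.2) c)
          + Finsupp.single (BTree.node T BTree.leaf, BTree.node S₁ S₂) 1 = _
      rw [sum_single_eq_mapDomain, show D (BTree.node S₁ S₂)
          = Finsupp.single ((BTree.leaf, BTree.node S₁ S₂) : BTree × BTree) (1 : K)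
            + Finsupp.mapDomain (fun p => (BTree.node S₁ p.1, p.2)) (D S₂) from rfl,
        Finsupp.mapDomain_add, Finsupp.mapDomain_single, ← h, add_comm]

lemma deltaP_eq (t : BTree) :
    deltaP (K := K) t = D t + Finsupp.single (t, BTree.leaf) 1 := by
  cases t with
  | leaf => simp [deltaP, D]
  | node T S =>
      rw [deltaP, if_neg (by simp), show D (BTree.node T S)
          = Finsupp.single ((BTree.leaf, BTree.node T S) : BTree × BTree) (1 : K)
            + Finsupp.mapDomain (fun p => (BTree.node T p.1, p.2)) (D S) from rfl,
        ← prune_node]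


/-- `(D ⊗ id)` -/
def eL : ((BTree × BTree) →₀ K) →ₗ[K] ((BTree × BTree × BTree) →₀ K) :=
  Finsupp.linearCombination K fun p =>
    Finsupp.mapDomain (fun q : BTree × BTree => (q.1, q.2, p.2)) (D p.1)

/-- `(id ⊗ D)` -/
def eR : ((BTree × BTree) →₀ K) →ₗ[K] ((BTree × BTree × BTree) →₀ K) :=
  Finsupp.linearCombination K fun p =>
    Finsupp.mapDomain (fun q : BTree × BTree => (p.1, q.1, q.2)) (D p.2)

/-- inserting a leaf in the middle -/
def mid : ((BTree × BTree) →₀ K) →ₗ[K] ((BTree × BTree × BTree) →₀ K) :=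
  Finsupp.lmapDomain K K fun p : BTree × BTree => (p.1, BTree.leaf, p.2)

lemma linComb_add_fun {α β : Type*} (v w : α → (β →₀ K)) (l : α →₀ K) :
    Finsupp.linearCombination K (fun a => v a + w a) l
      = Finsupp.linearCombination K v l + Finsupp.linearCombination K w l := by
  simp only [Finsupp.linearCombination_apply, smul_add]
  exact Finsupp.sum_add

lemma linComb_single_fun {α β : Type*} (f : α → β) (l : α →₀ K) :
    Finsupp.linearCombination K (fun a => Finsupp.single (f a) (1 : K)) l
      = Finsupp.mapDomain f l := by
  simp only [Finsupp.linearCombination_apply, Finsupp.smul_single', mul_one]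
  rfl

lemma eL_mapDomain (T : BTree) (x : (BTree × BTree) →₀ K) :
    eL (Finsupp.mapDomain (fun p : BTree × BTree => (BTree.node T p.1, p.2)) x)
      = Finsupp.mapDomain (fun p : BTree × BTree => (BTree.leaf, BTree.node T p.1, p.2)) x
        + Finsupp.mapDomain (fun q : BTree × BTree × BTree => (BTree.node T q.1, q.2)) (eL x) := by
  rw [eL, Finsupp.linearCombination_mapDomain]
  have : ((fun p : BTree × BTree =>
        Finsupp.mapDomain (fun q : BTree × BTree => (q.1, q.2, p.2)) (D p.1 : (BTree × BTree) →₀ K))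
      ∘ fun p : BTree × BTree => (BTree.node T p.1, p.2))
      = fun p : BTree × BTree =>
        Finsupp.single (BTree.leaf, BTree.node T p.1, p.2) (1 : K)
        + Finsupp.mapDomain (fun q : BTree × BTree × BTree => (BTree.node T q.1, q.2))
            (Finsupp.mapDomain (fun q : BTree × BTree => (q.1, q.2, p.2)) (D p.1)) := by
    funext p
    show Finsupp.mapDomain (fun q : BTree × BTree => (q.1, q.2, p.2)) (D (BTree.node T p.1)) = _
    rw [show D (BTree.node T p.1)
        = Finsupp.single ((BTree.leaf, BTree.node T p.1) : BTree × BTree) (1 : K)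
          + Finsupp.mapDomain (fun q => (BTree.node T q.1, q.2)) (D p.1) from rfl,
      Finsupp.mapDomain_add, Finsupp.mapDomain_single, ← Finsupp.mapDomain_comp,
      ← Finsupp.mapDomain_comp]
    rfl
  rw [this, linComb_add_fun, linComb_single_fun]
  congr 1
  show _ = (Finsupp.lmapDomain K K fun q : BTree × BTree × BTree => (BTree.node T q.1, q.2))
      (Finsupp.linearCombination K (fun p : BTree × BTree =>
        Finsupp.mapDomain (fun q : BTree × BTree => (q.1, q.2, p.2)) (D p.1)) x)
  exact (Finsupp.apply_linearCombination K
    (Finsupp.lmapDomain K K fun q : BTree × BTree × BTree => (BTree.node T q.1, q.2)) _ x).symm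

lemma eR_mapDomain (T : BTree) (x : (BTree × BTree) →₀ K) :
    eR (Finsupp.mapDomain (fun p : BTree × BTree => (BTree.node T p.1, p.2)) x)
      = Finsupp.mapDomain (fun q : BTree × BTree × BTree => (BTree.node T q.1, q.2)) (eR x) := by
  rw [eR, Finsupp.linearCombination_mapDomain]
  rw [show ((fun p : BTree × BTree =>
        Finsupp.mapDomain (fun q : BTree × BTree => (p.1, q.1, q.2)) (D p.2 : (BTree × BTree) →₀ K))
      ∘ fun p : BTree × BTree => (BTree.node T p.1, p.2))
      = fun p : BTree × BTree =>
        (Finsupp.lmapDomain K K fun q : BTree × BTree × BTree => (BTree.node T q.1, q.2))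
          (Finsupp.mapDomain (fun q : BTree × BTree => (p.1, q.1, q.2)) (D p.2)) from by
    funext p
    show Finsupp.mapDomain (fun q : BTree × BTree => (BTree.node T p.1, q.1, q.2)) (D p.2) = _
    simp only [Finsupp.lmapDomain_apply, ← Finsupp.mapDomain_comp]
    rfl]
  show _ = (Finsupp.lmapDomain K K fun q : BTree × BTree × BTree => (BTree.node T q.1, q.2))
      (Finsupp.linearCombination K (fun p : BTree × BTree =>
        Finsupp.mapDomain (fun q : BTree × BTree => (p.1, q.1, q.2)) (D p.2)) x)
  exact (Finsupp.apply_linearCombination K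
    (Finsupp.lmapDomain K K fun q : BTree × BTree × BTree => (BTree.node T q.1, q.2)) _ x).symm

lemma mid_mapDomain (T : BTree) (x : (BTree × BTree) →₀ K) :
    mid (Finsupp.mapDomain (fun p : BTree × BTree => (BTree.node T p.1, p.2)) x)
      = Finsupp.mapDomain (fun q : BTree × BTree × BTree => (BTree.node T q.1, q.2)) (mid x) := by
  simp only [mid, Finsupp.lmapDomain_apply, ← Finsupp.mapDomain_comp]
  rfl

lemma key : ∀ t : BTree, eL (D t : (BTree × BTree) →₀ K) + mid (D t) = eR (D t)
  | .leaf => by simp [D]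
  | .node T S => by
      have ih := key S
      rw [show D (BTree.node T S)
          = Finsupp.single ((BTree.leaf, BTree.node T S) : BTree × BTree) (1 : K)
            + Finsupp.mapDomain (fun p => (BTree.node T p.1, p.2)) (D S) from rfl]
      simp only [map_add]
      rw [eL_mapDomain, eR_mapDomain, mid_mapDomain]
      have h1 : eL (Finsupp.single ((BTree.leaf, BTree.node T S) : BTree × BTree) (1 : K)) = 0 := by
        rw [eL, Finsupp.linearCombination_single]
        show (1 : K) • Finsupp.mapDomain _ (D BTree.leaf : (BTree × BTree) →₀ K) = 0
        simp [D]
      have h2 : mid (Finsupp.single ((BTree.leaf, BTree.node T S) : BTree × BTree) (1 : K))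
          = Finsupp.single (BTree.leaf, BTree.leaf, BTree.node T S) (1 : K) := by
        simp [mid]
      have h3 : eR (Finsupp.single ((BTree.leaf, BTree.node T S) : BTree × BTree) (1 : K))
          = Finsupp.single (BTree.leaf, BTree.leaf, BTree.node T S) (1 : K)
            + Finsupp.mapDomain
                (fun p : BTree × BTree => (BTree.leaf, BTree.node T p.1, p.2)) (D S) := by
        rw [eR, Finsupp.linearCombination_single, one_smul]
        show Finsupp.mapDomain (fun q : BTree × BTree => (BTree.leaf, q.1, q.2))
            (D (BTree.node T S)) = _
        rw [show D (BTree.node T S)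
            = Finsupp.single ((BTree.leaf, BTree.node T S) : BTree × BTree) (1 : K)
              + Finsupp.mapDomain (fun p => (BTree.node T p.1, p.2)) (D S) from rfl,
          Finsupp.mapDomain_add, Finsupp.mapDomain_single, ← Finsupp.mapDomain_comp]
        rfl
      have hPhi : Finsupp.mapDomain (fun q : BTree × BTree × BTree => (BTree.node T q.1, q.2))
            (eL (D S : (BTree × BTree) →₀ K))
          + Finsupp.mapDomain (fun q : BTree × BTree × BTree => (BTree.node T q.1, q.2))
            (mid (D S))
          = Finsupp.mapDomain (fun q : BTree × BTree × BTree => (BTree.node T q.1, q.2))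
            (eR (D S)) := by
        rw [← Finsupp.mapDomain_add, ih]
      rw [h1, h2, h3, ← hPhi]
      abel


lemma sum_single_eq_smul_mapDomain {α β : Type*} (v : α →₀ K) (f : α → β) (c : K) :
    (v.sum fun a d => Finsupp.single (f a) (c * d)) = c • Finsupp.mapDomain f v := by
  rw [Finsupp.mapDomain, Finsupp.smul_sum]
  exact Finsupp.sum_congr fun a _ => (Finsupp.smul_single' c _ _).symm

lemma expandL_eq (x : (BTree × BTree) →₀ K) : expandL x = eL x + mid x := by
  rw [expandL]
  have : ∀ p : BTree × BTree, ∀ c : K,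
      ((deltaP p.1).sum fun q d => Finsupp.single ((q.1, q.2, p.2) : BTree × BTree × BTree) (c * d))
        = c • Finsupp.mapDomain (fun q : BTree × BTree => (q.1, q.2, p.2)) (D p.1)
          + Finsupp.single (p.1, BTree.leaf, p.2) c := by
    intro p c
    rw [sum_single_eq_smul_mapDomain, deltaP_eq, Finsupp.mapDomain_add, smul_add,
      Finsupp.mapDomain_single, Finsupp.smul_single', mul_one]
  rw [Finsupp.sum_congr (g2 := fun p c =>
      c • Finsupp.mapDomain (fun q : BTree × BTree => (q.1, q.2, p.2)) (D p.1)
        + Finsupp.single (p.1, BTree.leaf, p.2) c) fun p _ => this p (x p), Finsupp.sum_add]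
  congr 1

lemma expandR_eq (x : (BTree × BTree) →₀ K) : expandR x = eR x
    + Finsupp.mapDomain (fun p : BTree × BTree => (p.1, p.2, BTree.leaf)) x := by
  rw [expandR]
  have : ∀ p : BTree × BTree, ∀ c : K,
      ((deltaP p.2).sum fun q d => Finsupp.single ((p.1, q.1, q.2) : BTree × BTree × BTree) (c * d))
        = c • Finsupp.mapDomain (fun q : BTree × BTree => (p.1, q.1, q.2)) (D p.2)
          + Finsupp.single (p.1, p.2, BTree.leaf) c := by
    intro p c
    rw [sum_single_eq_smul_mapDomain, deltaP_eq, Finsupp.mapDomain_add, smul_add,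
      Finsupp.mapDomain_single, Finsupp.smul_single', mul_one]
  rw [Finsupp.sum_congr (g2 := fun p c =>
      c • Finsupp.mapDomain (fun q : BTree × BTree => (p.1, q.1, q.2)) (D p.2)
        + Finsupp.single (p.1, p.2, BTree.leaf) c) fun p _ => this p (x p), Finsupp.sum_add]
  congr 1

lemma coassoc (t : BTree) : expandL (K := K) (deltaP t) = expandR (deltaP t) := by
  rw [expandL_eq, expandR_eq, deltaP_eq]
  simp only [map_add, Finsupp.mapDomain_add, Finsupp.mapDomain_single]
  have h1 : eL (Finsupp.single ((t, BTree.leaf) : BTree × BTree) (1 : K))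
      = Finsupp.mapDomain (fun p : BTree × BTree => (p.1, p.2, BTree.leaf)) (D t) := by
    rw [eL, Finsupp.linearCombination_single, one_smul]
  have h2 : eR (Finsupp.single ((t, BTree.leaf) : BTree × BTree) (1 : K)) = 0 := by
    rw [eR, Finsupp.linearCombination_single, one_smul]
    show Finsupp.mapDomain _ (D BTree.leaf : (BTree × BTree) →₀ K) = 0
    simp [D]
  have h3 : mid (Finsupp.single ((t, BTree.leaf) : BTree × BTree) (1 : K))
      = Finsupp.single (t, BTree.leaf, BTree.leaf) (1 : K) := by simp [mid]
  rw [h1, h2, h3, ← key t]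
  abel


lemma D_snd_ne : ∀ t : BTree, ∀ p ∈ (D t : (BTree × BTree) →₀ K).support, p.2 ≠ BTree.leaf
  | .leaf => by simp [D]
  | .node T S => by
      intro p hp
      rw [show D (BTree.node T S)
          = Finsupp.single ((BTree.leaf, BTree.node T S) : BTree × BTree) (1 : K)
            + Finsupp.mapDomain (fun p => (BTree.node T p.1, p.2)) (D S) from rfl] at hp
      rcases Finset.mem_union.1 (Finsupp.support_add hp) with h | h
      · have := Finsupp.support_single_subset h
        simp only [Finset.mem_singleton] at this
        subst this; simp
      · have := Finsupp.mapDomain_support h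
        simp only [Finset.mem_image] at this
        obtain ⟨a, ha, rfl⟩ := this
        exact D_snd_ne S a ha

lemma prune_fst_ne (t : BTree) : ∀ p ∈ (prune (K := K) t).support, p.1 ≠ BTree.leaf := by
  cases t with
  | leaf => simp [prune]
  | node T S =>
      intro p hp
      rw [prune_node] at hp
      have := Finsupp.mapDomain_support hp
      simp only [Finset.mem_image] at this
      obtain ⟨a, _, rfl⟩ := this
      simp

lemma counitL (t : BTree) :
    ((deltaP t).sum fun p c => (eps (K := K) p.1 * c) • Finsupp.single p.2 (1 : K))
      = Finsupp.single t 1 := by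
  cases t with
  | leaf =>
      rw [deltaP, if_pos rfl, Finsupp.sum_single_index (by simp)]
      simp [eps]
  | node T S =>
      rw [deltaP, if_neg (by simp)]
      rw [Finsupp.sum_add_index' (by intro a; simp) (by intro a b₁ b₂; rw [mul_add, add_smul]),
        Finsupp.sum_add_index' (by intro a; simp) (by intro a b₁ b₂; rw [mul_add, add_smul]),
        Finsupp.sum_single_index (by simp), Finsupp.sum_single_index (by simp)]
      have h1 : ((prune (BTree.node T S) : (BTree × BTree) →₀ K).sum
          fun p c => (eps (K := K) p.1 * c) • Finsupp.single p.2 (1 : K)) = 0 :=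
        Finset.sum_eq_zero fun p hp => by
          simp only [eps]
          rw [if_neg (prune_fst_ne _ p hp), zero_mul, zero_smul]
      rw [h1]
      simp [eps]

lemma counitR (t : BTree) :
    ((deltaP t).sum fun p c => (eps (K := K) p.2 * c) • Finsupp.single p.1 (1 : K))
      = Finsupp.single t 1 := by
  rw [deltaP_eq]
  rw [Finsupp.sum_add_index' (by intro a; simp) (by intro a b₁ b₂; rw [mul_add, add_smul]),
    Finsupp.sum_single_index (by simp)]
  have h1 : ((D t : (BTree × BTree) →₀ K).sum
      fun p c => (eps (K := K) p.2 * c) • Finsupp.single p.1 (1 : K)) = 0 :=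
    Finset.sum_eq_zero fun p hp => by
      simp only [eps]
      rw [if_neg (D_snd_ne t p hp), zero_mul, zero_smul]
  rw [h1]
  simp [eps]


def imgP : ((BTree × BTree) →₀ K) →ₗ[K] TA K ⊗[K] TA K :=
  Finsupp.linearCombination K fun p : BTree × BTree => emb p.1 ⊗ₜ[K] emb p.2

lemma img_eq (x : (BTree × BTree) →₀ K) : img x = imgP x :=
  (Finsupp.linearCombination_apply _ x).symm

def img3 : ((BTree × BTree × BTree) →₀ K) →ₗ[K] TA K ⊗[K] (TA K ⊗[K] TA K) :=
  Finsupp.linearCombination K fun q : BTree × BTree × BTree =>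
    emb q.1 ⊗ₜ[K] (emb q.2.1 ⊗ₜ[K] emb q.2.2)

def comul : TA K →ₐ[K] TA K ⊗[K] TA K :=
  TensorAlgebra.lift K (Finsupp.linearCombination K
    fun s : {t : BTree // t ≠ BTree.leaf} => img (deltaP s.1))

def couni : TA K →ₐ[K] K :=
  TensorAlgebra.lift K (0 : ({t : BTree // t ≠ BTree.leaf} →₀ K) →ₗ[K] K)

lemma emb_leaf : emb (K := K) BTree.leaf = 1 := dif_pos rfl

lemma emb_ne {t : BTree} (h : t ≠ BTree.leaf) :
    emb (K := K) t
      = TensorAlgebra.ι K (Finsupp.single (⟨t, h⟩ : {t : BTree // t ≠ BTree.leaf}) (1 : K)) :=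
  dif_neg h

lemma comul_emb (t : BTree) : comul (emb (K := K) t) = img (deltaP t) := by
  by_cases h : t = BTree.leaf
  · subst h
    rw [emb_leaf, map_one, img, deltaP, if_pos rfl, Finsupp.sum_single_index (by simp),
      one_smul, emb_leaf, Algebra.TensorProduct.one_def]
  · rw [emb_ne h, comul, TensorAlgebra.lift_ι_apply, Finsupp.linearCombination_single, one_smul]

lemma couni_emb (t : BTree) : couni (emb (K := K) t) = eps t := by
  by_cases h : t = BTree.leaf
  · subst h
    rw [emb_leaf, map_one, eps, if_pos rfl]
  · rw [emb_ne h, couni, TensorAlgebra.lift_ι_apply, eps, if_neg h, LinearMap.zero_apply]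

lemma expandL_linComb (x : (BTree × BTree) →₀ K) :
    expandL x = Finsupp.linearCombination K (fun p : BTree × BTree =>
      Finsupp.mapDomain (fun q : BTree × BTree => (q.1, q.2, p.2)) (deltaP p.1)) x := by
  rw [expandL, Finsupp.linearCombination_apply]
  exact Finsupp.sum_congr fun p _ => sum_single_eq_smul_mapDomain _ _ _

lemma expandR_linComb (x : (BTree × BTree) →₀ K) :
    expandR x = Finsupp.linearCombination K (fun p : BTree × BTree =>
      Finsupp.mapDomain (fun q : BTree × BTree => (p.1, q.1, q.2)) (deltaP p.2)) x := by
  rw [expandR, Finsupp.linearCombination_apply]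
  exact Finsupp.sum_congr fun p _ => sum_single_eq_smul_mapDomain _ _ _

lemma assoc_img_tmul (y : (BTree × BTree) →₀ K) (s : BTree) :
    (TensorProduct.assoc K (TA K) (TA K) (TA K)) (imgP y ⊗ₜ[K] emb s)
      = img3 (Finsupp.mapDomain (fun q : BTree × BTree => (q.1, q.2, s)) y) := by
  set L : (TA K ⊗[K] TA K) →ₗ[K] TA K ⊗[K] (TA K ⊗[K] TA K) :=
    (TensorProduct.assoc K (TA K) (TA K) (TA K)).toLinearMap ∘ₗ
      ((TensorProduct.mk K (TA K ⊗[K] TA K) (TA K)).flip (emb s)) with hL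
  show L (imgP y) = _
  rw [imgP, Finsupp.apply_linearCombination, img3, Finsupp.linearCombination_mapDomain]
  rfl

lemma tmul_img (y : (BTree × BTree) →₀ K) (s : BTree) :
    (emb s ⊗ₜ[K] imgP y : TA K ⊗[K] (TA K ⊗[K] TA K))
      = img3 (Finsupp.mapDomain (fun q : BTree × BTree => (s, q.1, q.2)) y) := by
  set L : (TA K ⊗[K] TA K) →ₗ[K] TA K ⊗[K] (TA K ⊗[K] TA K) :=
    TensorProduct.mk K (TA K) (TA K ⊗[K] TA K) (emb s) with hL
  show L (imgP y) = _
  rw [imgP, Finsupp.apply_linearCombination, img3, Finsupp.linearCombination_mapDomain]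
  rfl

lemma mapL_img (x : (BTree × BTree) →₀ K) :
    (TensorProduct.assoc K (TA K) (TA K) (TA K))
        ((TensorProduct.map comul.toLinearMap LinearMap.id) (img x))
      = img3 (expandL x) := by
  rw [img_eq, expandL_linComb]
  set L : (TA K ⊗[K] TA K) →ₗ[K] TA K ⊗[K] (TA K ⊗[K] TA K) :=
    (TensorProduct.assoc K (TA K) (TA K) (TA K)).toLinearMap ∘ₗ
      TensorProduct.map comul.toLinearMap LinearMap.id with hL
  show L (imgP x) = _
  rw [imgP, Finsupp.apply_linearCombination, Finsupp.apply_linearCombination]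
  congr 1
  congr 1
  funext p
  show L (emb p.1 ⊗ₜ[K] emb p.2) = _
  rw [hL]
  simp only [LinearMap.coe_comp, Function.comp_apply, TensorProduct.map_tmul,
    LinearMap.id_coe, id_eq, AlgHom.toLinearMap_apply, LinearEquiv.coe_coe]
  rw [comul_emb, img_eq, assoc_img_tmul]

lemma mapR_img (x : (BTree × BTree) →₀ K) :
    (TensorProduct.map LinearMap.id comul.toLinearMap) (img x) = img3 (expandR x) := by
  rw [img_eq, expandR_linComb]
  set L : (TA K ⊗[K] TA K) →ₗ[K] TA K ⊗[K] (TA K ⊗[K] TA K) :=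
    TensorProduct.map LinearMap.id comul.toLinearMap with hL
  show L (imgP x) = _
  rw [imgP, Finsupp.apply_linearCombination, Finsupp.apply_linearCombination]
  congr 1
  congr 1
  funext p
  show L (emb p.1 ⊗ₜ[K] emb p.2) = _
  rw [hL]
  simp only [TensorProduct.map_tmul, LinearMap.id_coe, id_eq, AlgHom.toLinearMap_apply]
  rw [comul_emb, img_eq, tmul_img]
  rfl


lemma lid_img (t : BTree) :
    (TensorProduct.lid K (TA K))
        ((TensorProduct.map couni.toLinearMap LinearMap.id) (img (deltaP t)))
      = emb (K := K) t := by
  rw [img_eq]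
  set L : (TA K ⊗[K] TA K) →ₗ[K] TA K :=
    (TensorProduct.lid K (TA K)).toLinearMap ∘ₗ
      TensorProduct.map couni.toLinearMap LinearMap.id with hL
  show L (imgP (deltaP t)) = _
  rw [imgP, Finsupp.apply_linearCombination, Finsupp.linearCombination_apply]
  have h2 := congrArg (Finsupp.linearCombination K (fun s : BTree => emb (K := K) s))
    (counitL (K := K) t)
  rw [map_finsuppSum] at h2
  simp only [map_smul, Finsupp.linearCombination_single, one_smul] at h2
  rw [← h2]
  refine Finsupp.sum_congr fun p _ => ?_
  rw [hL]
  simp only [LinearMap.coe_comp, Function.comp_apply, TensorProduct.map_tmul, LinearMap.id_coe,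
    id_eq, AlgHom.toLinearMap_apply, LinearEquiv.coe_coe, TensorProduct.lid_tmul, couni_emb]
  rw [smul_smul, mul_comm]

lemma rid_img (t : BTree) :
    (TensorProduct.rid K (TA K))
        ((TensorProduct.map LinearMap.id couni.toLinearMap) (img (deltaP t)))
      = emb (K := K) t := by
  rw [img_eq]
  set L : (TA K ⊗[K] TA K) →ₗ[K] TA K :=
    (TensorProduct.rid K (TA K)).toLinearMap ∘ₗ
      TensorProduct.map LinearMap.id couni.toLinearMap with hL
  show L (imgP (deltaP t)) = _
  rw [imgP, Finsupp.apply_linearCombination, Finsupp.linearCombination_apply]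
  have h2 := congrArg (Finsupp.linearCombination K (fun s : BTree => emb (K := K) s))
    (counitR (K := K) t)
  rw [map_finsuppSum] at h2
  simp only [map_smul, Finsupp.linearCombination_single, one_smul] at h2
  rw [← h2]
  refine Finsupp.sum_congr fun p _ => ?_
  rw [hL]
  simp only [LinearMap.coe_comp, Function.comp_apply, TensorProduct.map_tmul, LinearMap.id_coe,
    id_eq, AlgHom.toLinearMap_apply, LinearEquiv.coe_coe, TensorProduct.rid_tmul, couni_emb]
  rw [smul_smul, mul_comm]


set_option synthInstance.maxHeartbeats 100000

lemma gen_red {B : Type*} [Semiring B] [Algebra K B] {F G : TA K →ₐ[K] B}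
    (h : ∀ t : BTree, t ≠ BTree.leaf → F (emb t) = G (emb t)) : F = G := by
  apply TensorAlgebra.hom_ext
  apply Finsupp.lhom_ext
  intro a b
  obtain ⟨t, ht⟩ := a
  have hs : Finsupp.single (⟨t, ht⟩ : {u : BTree // u ≠ BTree.leaf}) b
      = b • Finsupp.single (⟨t, ht⟩ : {u : BTree // u ≠ BTree.leaf}) (1 : K) := by
    rw [Finsupp.smul_single', mul_one]
  simp only [LinearMap.coe_comp, Function.comp_apply, AlgHom.toLinearMap_apply]
  rw [hs, map_smul, map_smul, map_smul, ← emb_ne ht, h t ht]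

lemma c_rid2 (z : TA K ⊗[K] K) :
    (Algebra.TensorProduct.rid K K (TA K)).toAlgHom z = (TensorProduct.rid K (TA K)) z := by
  rw [← TensorProduct.AlgebraTensorModule.rid_eq_rid]
  rfl

set_option maxHeartbeats 1000000 in
lemma comul_coassoc (x : TA K) :
    (TensorProduct.assoc K (TA K) (TA K) (TA K))
        ((TensorProduct.map comul.toLinearMap LinearMap.id) (comul x))
      = (TensorProduct.map LinearMap.id comul.toLinearMap) (comul x) := by
  have hA : ((Algebra.TensorProduct.assoc K K K (TA K) (TA K) (TA K)).toAlgHom.comp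
        ((Algebra.TensorProduct.map comul (AlgHom.id K (TA K))).comp comul) :
        TA K →ₐ[K] TA K ⊗[K] (TA K ⊗[K] TA K))
      = (Algebra.TensorProduct.map (AlgHom.id K (TA K)) comul).comp comul := by
    refine gen_red fun t _ => ?_
    show (TensorProduct.assoc K (TA K) (TA K) (TA K))
        ((TensorProduct.map comul.toLinearMap LinearMap.id) (comul (emb t)))
      = (TensorProduct.map LinearMap.id comul.toLinearMap) (comul (emb t))
    rw [comul_emb, mapL_img, mapR_img, coassoc]
  exact DFunLike.congr_fun hA x

set_option maxHeartbeats 1000000 in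
lemma couni_lid (x : TA K) :
    (TensorProduct.lid K (TA K))
        ((TensorProduct.map couni.toLinearMap LinearMap.id) (comul x)) = x := by
  have hA : ((Algebra.TensorProduct.lid K (TA K)).toAlgHom.comp
        ((Algebra.TensorProduct.map couni (AlgHom.id K (TA K))).comp comul) :
        TA K →ₐ[K] TA K)
      = AlgHom.id K (TA K) := by
    refine gen_red fun t _ => ?_
    show (TensorProduct.lid K (TA K))
        ((TensorProduct.map couni.toLinearMap LinearMap.id) (comul (emb t))) = emb t
    rw [comul_emb, lid_img]
  exact DFunLike.congr_fun hA x

set_option maxHeartbeats 1000000 in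
lemma couni_rid (x : TA K) :
    (TensorProduct.rid K (TA K))
        ((TensorProduct.map LinearMap.id couni.toLinearMap) (comul x)) = x := by
  have hA : ((Algebra.TensorProduct.rid K K (TA K)).toAlgHom.comp
        ((Algebra.TensorProduct.map (AlgHom.id K (TA K)) couni).comp comul) :
        TA K →ₐ[K] TA K)
      = AlgHom.id K (TA K) := by
    refine gen_red fun t _ => ?_
    rw [AlgHom.comp_apply, AlgHom.comp_apply, c_rid2]
    show (TensorProduct.rid K (TA K))
        ((TensorProduct.map LinearMap.id couni.toLinearMap) (comul (emb t))) = emb t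
    rw [comul_emb, rid_img]
  have h := DFunLike.congr_fun hA x
  rw [AlgHom.comp_apply, AlgHom.comp_apply, c_rid2] at h
  exact h

end Aux

theorem pruning_hopf_algebra :
    -- Δᴾ is coassociative
    (∀ t : BTree, expandL (K := K) (deltaP t) = expandR (deltaP t)) ∧
    -- ε is a counit for Δᴾ
    (∀ t : BTree,
      ((deltaP t).sum fun p c => (eps (K := K) p.1 * c) • Finsupp.single p.2 (1 : K))
        = Finsupp.single t 1) ∧
    (∀ t : BTree,
      ((deltaP t).sum fun p c => (eps (K := K) p.2 * c) • Finsupp.single p.1 (1 : K))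
        = Finsupp.single t 1) ∧
    -- consequently, `T(k[Y_∞])` is a bialgebra with comultiplication the
    -- algebra map extending Δᴾ
    (∃ (comul : TA K →ₐ[K] TA K ⊗[K] TA K) (couni : TA K →ₐ[K] K),
      (∀ t : BTree, comul (emb t) = img (deltaP t)) ∧
      (∀ t : BTree, couni (emb t) = eps (K := K) t) ∧
      (∀ x : TA K,
        (TensorProduct.assoc K (TA K) (TA K) (TA K))
            ((TensorProduct.map comul.toLinearMap LinearMap.id) (comul x))
          = (TensorProduct.map LinearMap.id comul.toLinearMap) (comul x)) ∧
      (∀ x : TA K,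
        (TensorProduct.lid K (TA K))
            ((TensorProduct.map couni.toLinearMap LinearMap.id) (comul x)) = x) ∧
      (∀ x : TA K,
        (TensorProduct.rid K (TA K))
            ((TensorProduct.map LinearMap.id couni.toLinearMap) (comul x)) = x)) := by
  exact ⟨Aux.coassoc, Aux.counitL, Aux.counitR,
    ⟨Aux.comul, Aux.couni, Aux.comul_emb, Aux.couni_emb,
      Aux.comul_coassoc, Aux.couni_lid, Aux.couni_rid⟩⟩

end
end

section
/- Fix m, l ∈ {1,…,n}. On k[Y_∞^{(n)}], the free k-vector space on planar n-ary trees, define a bilinear product * by: 1 * x = x = x * 1 for all x, and for trees s = λ(s_1,…,s_n) and t = λ(t_1,…,t_n), s * t = λ(s_1,…,s_{m−1}, s_m * t, s_{m+1},…,s_n) + λ(t_1,…,t_{l−1}, s * t_l, t_{l+1},…,t_n) (by induction on total degree). Then * is associative with two-sided unit the single-leaf tree 1, and * is graded: if s has degree a and t has degree b, then s * t is a linear combination of trees of degree a + b. -/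
/- STATEMENT 12: the associative graded product on the span of planar
n-ary trees determined by
`s * t = λ(s₁,…,sₘ₋₁, sₘ*t, sₘ₊₁,…,sₙ) + λ(t₁,…,t_{l−1}, s*t_l, t_{l+1},…,tₙ)`. -/


inductive NTree (n : ℕ) : Type
  | leaf : NTree n
  | node : (Fin n → NTree n) → NTree n

namespace NTree

/-- the degree: the number of applications of `λ` (internal vertices). -/
noncomputable def deg {n : ℕ} (t : NTree n) : ℕ :=
  NTree.rec (motive := fun _ => ℕ) 0 (fun _ ih => 1 + ∑ i, ih i) t

theorem deg_node {n : ℕ} (f : Fin n → NTree n) : deg (node f) = 1 + ∑ i, deg (f i) := rfl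

theorem deg_lt {n : ℕ} (f : Fin n → NTree n) (i : Fin n) : deg (f i) < deg (node f) := by
  have h : deg (f i) ≤ ∑ j, deg (f j) :=
    Finset.single_le_sum (f := fun j => deg (f j)) (fun j _ => Nat.zero_le _) (Finset.mem_univ i)
  rw [deg_node]; omega

end NTree

noncomputable section
open Finsupp

variable {K : Type*} [Field K] {n : ℕ}

/-- replace the `i`-th subtree of a node by each term of a linear combination. -/
def nodeAt (f : Fin n → NTree n) (i : Fin n) (x : NTree n →₀ K) : NTree n →₀ K :=
  x.sum fun u c => Finsupp.single (NTree.node (Function.update f i u)) c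

/-- the product on basis trees:
`1 * x = x = x * 1` and
`s * t = λ(s₁,…,sₘ*t,…,sₙ) + λ(t₁,…,s*t_l,…,tₙ)`. -/
def mulT (m l : Fin n) : NTree n → NTree n → (NTree n →₀ K)
  | .leaf, t => Finsupp.single t 1
  | .node f, .leaf => Finsupp.single (NTree.node f) 1
  | .node f, .node g =>
      nodeAt f m (mulT m l (f m) (.node g)) + nodeAt g l (mulT m l (.node f) (g l))
  termination_by s t => NTree.deg s + NTree.deg t
  decreasing_by
    · have := NTree.deg_lt f m; omega
    · have := NTree.deg_lt g l; omega

def star (m l : Fin n) (x y : NTree n →₀ K) : NTree n →₀ K :=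
  x.sum fun s a => y.sum fun t b => (a * b) • mulT m l s t
end

noncomputable section AuxAssoc
open Finsupp Function

namespace NAux

variable {K : Type*} [Field K] {n : ℕ}

theorem deg_leaf : (NTree.leaf : NTree n).deg = 0 := rfl

/-! ### `mulT` equations -/

theorem mulT_leaf (m l : Fin n) (t : NTree n) :
    mulT (K := K) m l .leaf t = Finsupp.single t 1 := by rw [mulT]

theorem mulT_node_leaf (m l : Fin n) (f : Fin n → NTree n) :
    mulT (K := K) m l (.node f) .leaf = Finsupp.single (NTree.node f) 1 := by rw [mulT]

theorem mulT_node_node (m l : Fin n) (f g : Fin n → NTree n) :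
    mulT (K := K) m l (.node f) (.node g)
      = nodeAt f m (mulT m l (f m) (.node g)) + nodeAt g l (mulT m l (.node f) (g l)) := by
  rw [mulT]

theorem mulT_leaf_right (m l : Fin n) (s : NTree n) :
    mulT (K := K) m l s .leaf = Finsupp.single s 1 := by
  cases s with
  | leaf => rw [mulT]
  | node f => rw [mulT]

/-! ### `nodeAt` lemmas -/

theorem nodeAt_eq (f : Fin n → NTree n) (i : Fin n) (x : NTree n →₀ K) :
    nodeAt f i x = Finsupp.mapDomain (fun u => NTree.node (Function.update f i u)) x := rfl

theorem nodeAt_single (f : Fin n → NTree n) (i : Fin n) (u : NTree n) (c : K) :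
    nodeAt f i (Finsupp.single u c) = Finsupp.single (NTree.node (Function.update f i u)) c := by
  rw [nodeAt_eq, Finsupp.mapDomain_single]

theorem nodeAt_zero (f : Fin n → NTree n) (i : Fin n) :
    nodeAt f i (0 : NTree n →₀ K) = 0 := by
  rw [nodeAt_eq, Finsupp.mapDomain_zero]

theorem nodeAt_add (f : Fin n → NTree n) (i : Fin n) (x y : NTree n →₀ K) :
    nodeAt f i (x + y) = nodeAt f i x + nodeAt f i y := by
  simp only [nodeAt_eq, Finsupp.mapDomain_add]

theorem nodeAt_smul (f : Fin n → NTree n) (i : Fin n) (c : K) (x : NTree n →₀ K) :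
    nodeAt f i (c • x) = c • nodeAt f i x := by
  simp only [nodeAt_eq, Finsupp.mapDomain_smul]

theorem nodeAt_update (f : Fin n → NTree n) (i : Fin n) (v : NTree n) (x : NTree n →₀ K) :
    nodeAt (Function.update f i v) i x = nodeAt f i x := by
  simp only [nodeAt_eq, Function.update_idem]

/-! ### bilinear extension helper `tot` -/

def tot (F : NTree n → (NTree n →₀ K)) (x : NTree n →₀ K) : NTree n →₀ K :=
  x.sum fun v c => c • F v

theorem tot_eq (F : NTree n → (NTree n →₀ K)) (x : NTree n →₀ K) :
    tot F x = Finsupp.linearCombination K F x := by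
  rw [tot, Finsupp.linearCombination_apply]

theorem tot_single (F : NTree n → (NTree n →₀ K)) (s : NTree n) (c : K) :
    tot F (Finsupp.single s c) = c • F s := by
  rw [tot_eq, Finsupp.linearCombination_single]

theorem tot_zero (F : NTree n → (NTree n →₀ K)) : tot F 0 = 0 := by
  rw [tot_eq, map_zero]

theorem tot_add (F : NTree n → (NTree n →₀ K)) (x y : NTree n →₀ K) :
    tot F (x + y) = tot F x + tot F y := by
  simp only [tot_eq, map_add]

theorem tot_smul (F : NTree n → (NTree n →₀ K)) (c : K) (x : NTree n →₀ K) :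
    tot F (c • x) = c • tot F x := by
  simp only [tot_eq, map_smul]

theorem tot_congr {F G : NTree n → (NTree n →₀ K)} (h : ∀ v, F v = G v) (x : NTree n →₀ K) :
    tot F x = tot G x := by
  rw [show F = G from funext h]

theorem tot_add_fun (F G : NTree n → (NTree n →₀ K)) (x : NTree n →₀ K) :
    tot (fun v => F v + G v) x = tot F x + tot G x := by
  simp only [tot, smul_add, Finsupp.sum_add]

theorem tot_smul_fun (F : NTree n → (NTree n →₀ K)) (c : K) (x : NTree n →₀ K) :
    tot (fun v => c • F v) x = c • tot F x := by
  rw [tot, tot, Finsupp.smul_sum]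
  exact Finsupp.sum_congr fun v _ => smul_comm _ _ _

theorem tot_zero_fun (x : NTree n →₀ K) : tot (fun _ => (0 : NTree n →₀ K)) x = 0 := by
  simp [tot]

theorem tot_id (x : NTree n →₀ K) : tot (fun v => Finsupp.single v (1 : K)) x = x := by
  simp only [tot, Finsupp.smul_single, smul_eq_mul, mul_one]
  exact Finsupp.sum_single x

theorem tot_nodeAt (F : NTree n → (NTree n →₀ K)) (f : Fin n → NTree n) (i : Fin n)
    (x : NTree n →₀ K) :
    tot F (nodeAt f i x) = tot (fun v => F (NTree.node (Function.update f i v))) x := by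
  rw [nodeAt_eq, tot,
    Finsupp.sum_mapDomain_index (by intro b; exact zero_smul _ _)
      (by intro b m₁ m₂; exact add_smul _ _ _)]
  rfl

theorem nodeAt_tot (F : NTree n → (NTree n →₀ K)) (f : Fin n → NTree n) (i : Fin n)
    (x : NTree n →₀ K) :
    nodeAt f i (tot F x) = tot (fun v => nodeAt f i (F v)) x := by
  induction x using Finsupp.induction_linear with
  | zero => rw [tot_zero, tot_zero, nodeAt_zero]
  | add p q hp hq => rw [tot_add, tot_add, nodeAt_add, hp, hq]
  | single a b => rw [tot_single, tot_single, nodeAt_smul]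

theorem tot_comp (G H : NTree n → (NTree n →₀ K)) (x : NTree n →₀ K) :
    tot G (tot H x) = tot (fun s => tot G (H s)) x := by
  induction x using Finsupp.induction_linear with
  | zero => rw [tot_zero, tot_zero, tot_zero]
  | add p q hp hq => rw [tot_add, tot_add, tot_add, hp, hq]
  | single a b => rw [tot_single, tot_single, tot_smul]

/-! ### half-products -/

def prec (m l : Fin n) : NTree n → NTree n → (NTree n →₀ K)
  | .leaf, _ => 0
  | .node f, t => nodeAt f m (mulT m l (f m) t)

def succT (m l : Fin n) : NTree n → NTree n → (NTree n →₀ K)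
  | _, .leaf => 0
  | s, .node g => nodeAt g l (mulT m l s (g l))

theorem prec_leaf (m l : Fin n) (t : NTree n) : prec (K := K) m l .leaf t = 0 := rfl

theorem prec_node (m l : Fin n) (f : Fin n → NTree n) (t : NTree n) :
    prec (K := K) m l (.node f) t = nodeAt f m (mulT m l (f m) t) := rfl

theorem succT_leaf (m l : Fin n) (s : NTree n) : succT (K := K) m l s .leaf = 0 := by
  cases s <;> rfl

theorem succT_node (m l : Fin n) (s : NTree n) (g : Fin n → NTree n) :
    succT (K := K) m l s (.node g) = nodeAt g l (mulT m l s (g l)) := by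
  cases s <;> rfl

theorem mulT_split_right (m l : Fin n) (v : NTree n) (h : Fin n → NTree n) :
    mulT (K := K) m l v (.node h) = prec m l v (.node h) + succT m l v (.node h) := by
  cases v with
  | leaf =>
    rw [mulT_leaf, prec_leaf, succT_node, mulT_leaf, nodeAt_single, Function.update_eq_self,
      zero_add]
  | node f => rw [mulT_node_node, prec_node, succT_node]

theorem mulT_split_left (m l : Fin n) (f : Fin n → NTree n) (w : NTree n) :
    mulT (K := K) m l (.node f) w = prec m l (.node f) w + succT m l (.node f) w := by
  cases w with
  | leaf =>
    rw [mulT_node_leaf, prec_node, succT_leaf, mulT_leaf_right, nodeAt_single,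
      Function.update_eq_self, add_zero]
  | node g => rw [mulT_node_node, prec_node, succT_node]

end NAux
end AuxAssoc

noncomputable section AuxAssoc2
open Finsupp Function
namespace NAux

variable {K : Type*} [Field K] {n : ℕ}

theorem nodeAt_swap {m l : Fin n} (hml : m ≠ l) (g : Fin n → NTree n)
    (A B : NTree n →₀ K) :
    tot (fun v => nodeAt (Function.update g l v) m B) A
      = tot (fun w => nodeAt (Function.update g m w) l A) B := by
  simp only [tot, nodeAt, Finsupp.smul_sum, Finsupp.smul_single]
  rw [Finsupp.sum_comm A B]
  refine Finsupp.sum_congr fun w hw => Finsupp.sum_congr fun v hv => ?_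
  rw [Function.update_comm (Ne.symm hml), smul_eq_mul, smul_eq_mul, mul_comm]

theorem assocT (m l : Fin n) :
    ∀ (N : ℕ) (s t u : NTree n), s.deg + t.deg + u.deg ≤ N →
      tot (fun v => mulT (K := K) m l v u) (mulT m l s t)
        = tot (fun w => mulT m l s w) (mulT m l t u) := by
  have leafS : ∀ (t u : NTree n),
      tot (fun v => mulT (K := K) m l v u) (mulT m l .leaf t)
        = tot (fun w => mulT m l .leaf w) (mulT m l t u) := by
    intro t u
    rw [mulT_leaf, tot_single, one_smul,
      tot_congr (fun w => mulT_leaf m l w), tot_id]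
  have leafT : ∀ (s u : NTree n),
      tot (fun v => mulT (K := K) m l v u) (mulT m l s .leaf)
        = tot (fun w => mulT m l s w) (mulT m l .leaf u) := by
    intro s u
    rw [mulT_leaf_right, tot_single, one_smul, mulT_leaf, tot_single, one_smul]
  have leafU : ∀ (s t : NTree n),
      tot (fun v => mulT (K := K) m l v .leaf) (mulT m l s t)
        = tot (fun w => mulT m l s w) (mulT m l t .leaf) := by
    intro s t
    rw [tot_congr (fun v => mulT_leaf_right m l v), tot_id,
      mulT_leaf_right, tot_single, one_smul]
  intro N
  induction N with
  | zero =>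
    intro s t u _
    cases s with
    | leaf => exact leafS t u
    | node f =>
      cases t with
      | leaf => exact leafT _ u
      | node g => exact absurd ‹_› (by have := NTree.deg_lt f m; omega)
  | succ N ih =>
    intro s t u hN
    cases s with
    | leaf => exact leafS t u
    | node f =>
    cases t with
    | leaf => exact leafT _ u
    | node g =>
    cases u with
    | leaf => exact leafU _ _
    | node h =>
    have hdf := NTree.deg_lt f m
    have hdg := NTree.deg_lt g l
    have hdh := NTree.deg_lt h l
    have IH1 := ih (f m) (.node g) (.node h) (by omega)
    have IH2 := ih (.node f) (.node g) (h l) (by omega)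
    have IH3 := ih (.node f) (g l) (.node h) (by omega)
    -- D1 : (s ≺ t) ≺ u = s ≺ (t * u)
    have D1 : tot (fun v => prec (K := K) m l v (.node h)) (prec m l (.node f) (.node g))
        = tot (fun w => prec m l (.node f) w) (mulT m l (.node g) (.node h)) := by
      have hL : tot (fun v => prec (K := K) m l v (.node h)) (prec m l (.node f) (.node g))
          = nodeAt f m (tot (fun v => mulT m l v (.node h)) (mulT m l (f m) (.node g))) := by
        rw [prec_node, tot_nodeAt,
          tot_congr (F := fun v => prec m l (NTree.node (Function.update f m v)) (.node h))
            (G := fun v => nodeAt f m (mulT m l v (.node h)))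
            (fun v => by simp only [prec_node, Function.update_self, nodeAt_update]),
          nodeAt_tot]
      have hR : tot (fun w => prec (K := K) m l (.node f) w) (mulT m l (.node g) (.node h))
          = nodeAt f m (tot (fun w => mulT m l (f m) w) (mulT m l (.node g) (.node h))) := by
        rw [tot_congr (F := fun w => prec (K := K) m l (.node f) w)
            (G := fun w => nodeAt f m (mulT m l (f m) w)) (fun w => prec_node m l f w),
          nodeAt_tot]
      rw [hL, hR, IH1]
    -- D3 : (s * t) ≻ u = s ≻ (t ≻ u)
    have D3 : tot (fun v => succT (K := K) m l v (.node h)) (mulT m l (.node f) (.node g))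
        = tot (fun w => succT m l (.node f) w) (succT m l (.node g) (.node h)) := by
      have hL : tot (fun v => succT (K := K) m l v (.node h)) (mulT m l (.node f) (.node g))
          = nodeAt h l (tot (fun v => mulT m l v (h l)) (mulT m l (.node f) (.node g))) := by
        rw [tot_congr (F := fun v => succT (K := K) m l v (.node h))
            (G := fun v => nodeAt h l (mulT m l v (h l))) (fun v => succT_node m l v h),
          nodeAt_tot]
      have hR : tot (fun w => succT (K := K) m l (.node f) w) (succT m l (.node g) (.node h))
          = nodeAt h l (tot (fun w => mulT m l (.node f) w) (mulT m l (.node g) (h l))) := by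
        rw [succT_node m l (.node g) h, tot_nodeAt,
          tot_congr (F := fun w => succT (K := K) m l (.node f) (.node (Function.update h l w)))
            (G := fun w => nodeAt h l (mulT m l (.node f) w))
            (fun w => by simp only [succT_node, Function.update_self, nodeAt_update]),
          nodeAt_tot]
      rw [hL, hR, IH2]
    -- D2 : (s ≻ t) ≺ u = s ≻ (t ≺ u)
    have D2 : tot (fun v => prec (K := K) m l v (.node h)) (succT m l (.node f) (.node g))
        = tot (fun w => succT m l (.node f) w) (prec m l (.node g) (.node h)) := by
      rw [succT_node m l (.node f) g, prec_node m l g (.node h), tot_nodeAt, tot_nodeAt]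
      by_cases hml : m = l
      · subst hml
        have hL : tot (fun v => prec (K := K) m m (.node (Function.update g m v)) (.node h))
              (mulT m m (.node f) (g m))
            = nodeAt g m (tot (fun v => mulT m m v (.node h)) (mulT m m (.node f) (g m))) := by
          rw [tot_congr
              (F := fun v => prec (K := K) m m (.node (Function.update g m v)) (.node h))
              (G := fun v => nodeAt g m (mulT m m v (.node h)))
              (fun v => by simp only [prec_node, Function.update_self, nodeAt_update]),
            nodeAt_tot]
        have hR : tot (fun w => succT (K := K) m m (.node f) (.node (Function.update g m w)))
              (mulT m m (g m) (.node h))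
            = nodeAt g m (tot (fun w => mulT m m (.node f) w) (mulT m m (g m) (.node h))) := by
          rw [tot_congr
              (F := fun w => succT (K := K) m m (.node f) (.node (Function.update g m w)))
              (G := fun w => nodeAt g m (mulT m m (.node f) w))
              (fun w => by simp only [succT_node, Function.update_self, nodeAt_update]),
            nodeAt_tot]
        rw [hL, hR, IH3]
      · rw [tot_congr
            (F := fun v => prec (K := K) m l (.node (Function.update g l v)) (.node h))
            (G := fun v => nodeAt (Function.update g l v) m (mulT m l (g m) (.node h)))
            (fun v => by simp only [prec_node, Function.update_of_ne hml]),
          tot_congr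
            (F := fun w => succT (K := K) m l (.node f) (.node (Function.update g m w)))
            (G := fun w => nodeAt (Function.update g m w) l (mulT m l (.node f) (g l)))
            (fun w => by simp only [succT_node, Function.update_of_ne (Ne.symm hml)])]
        exact nodeAt_swap hml g _ _
    -- assemble
    calc tot (fun v => mulT (K := K) m l v (.node h)) (mulT m l (.node f) (.node g))
        = tot (fun v => prec m l v (.node h) + succT m l v (.node h))
            (mulT m l (.node f) (.node g)) :=
          tot_congr (fun v => mulT_split_right m l v h) _
      _ = tot (fun v => prec m l v (.node h)) (mulT m l (.node f) (.node g))
            + tot (fun v => succT m l v (.node h)) (mulT m l (.node f) (.node g)) :=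
          tot_add_fun _ _ _
      _ = tot (fun v => prec m l v (.node h)) (prec m l (.node f) (.node g))
            + tot (fun v => prec m l v (.node h)) (succT m l (.node f) (.node g))
            + tot (fun v => succT m l v (.node h)) (mulT m l (.node f) (.node g)) := by
          rw [mulT_split_left, tot_add]
      _ = tot (fun w => prec m l (.node f) w) (mulT m l (.node g) (.node h))
            + tot (fun w => succT m l (.node f) w) (prec m l (.node g) (.node h))
            + tot (fun w => succT m l (.node f) w) (succT m l (.node g) (.node h)) := by
          rw [D1, D2, D3]
      _ = tot (fun w => prec m l (.node f) w) (mulT m l (.node g) (.node h))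
            + tot (fun w => succT m l (.node f) w) (mulT m l (.node g) (.node h)) := by
          rw [add_assoc, ← tot_add, ← mulT_split_left]
      _ = tot (fun w => prec m l (.node f) w + succT m l (.node f) w)
            (mulT m l (.node g) (.node h)) := (tot_add_fun _ _ _).symm
      _ = tot (fun w => mulT m l (.node f) w) (mulT m l (.node g) (.node h)) :=
          tot_congr (fun w => (mulT_split_left m l f w).symm) _

end NAux
end AuxAssoc2

noncomputable section AuxAssoc3
open Finsupp Function
namespace NAux

variable {K : Type*} [Field K] {n : ℕ}

theorem star_eq (m l : Fin n) (x y : NTree n →₀ K) :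
    star m l x y = tot (fun s => tot (fun t => mulT m l s t) y) x := by
  rw [show star m l x y = x.sum fun s a => y.sum fun t b => (a * b) • mulT m l s t from rfl,
    tot]
  refine Finsupp.sum_congr fun s _ => ?_
  rw [tot, Finsupp.smul_sum]
  exact Finsupp.sum_congr fun t _ => mul_smul _ _ _

theorem assoc_z (m l : Fin n) (s t : NTree n) (z : NTree n →₀ K) :
    tot (fun v => tot (fun w => mulT (K := K) m l v w) z) (mulT m l s t)
      = tot (fun w => mulT m l s w) (tot (fun w => mulT m l t w) z) := by
  induction z using Finsupp.induction_linear with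
  | zero =>
    rw [tot_zero, tot_zero,
      tot_congr (F := fun v => tot (fun w => mulT (K := K) m l v w) 0)
        (G := fun _ => (0 : NTree n →₀ K)) (fun v => tot_zero _), tot_zero_fun]
  | add p q hp hq =>
    rw [tot_congr (F := fun v => tot (fun w => mulT (K := K) m l v w) (p + q))
        (G := fun v => tot (fun w => mulT m l v w) p + tot (fun w => mulT m l v w) q)
        (fun v => tot_add _ _ _),
      tot_add_fun, hp, hq, tot_add, ← tot_add]
  | single u c =>
    rw [tot_congr (F := fun v => tot (fun w => mulT (K := K) m l v w) (Finsupp.single u c))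
        (G := fun v => c • mulT m l v u) (fun v => tot_single _ _ _),
      tot_smul_fun, tot_single, tot_smul,
      assocT m l (s.deg + t.deg + u.deg) s t u le_rfl]

theorem star_assoc (m l : Fin n) (x y z : NTree n →₀ K) :
    star m l (star m l x y) z = star m l x (star m l y z) := by
  rw [star_eq m l (star m l x y) z, star_eq m l x y, tot_comp,
    star_eq m l x (star m l y z), star_eq m l y z]
  refine congrFun (congrArg tot (funext fun s => ?_)) x
  rw [tot_comp, tot_comp]
  exact congrFun (congrArg tot (funext fun t => assoc_z m l s t z)) y

theorem star_single_single (m l : Fin n) (s t : NTree n) :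
    star m l (Finsupp.single s (1 : K)) (Finsupp.single t 1) = mulT m l s t := by
  rw [star_eq, tot_single, tot_single, one_smul, one_smul]

theorem star_leaf_left (m l : Fin n) (x : NTree n →₀ K) :
    star m l (Finsupp.single NTree.leaf 1) x = x := by
  rw [star_eq, tot_single, one_smul,
    tot_congr (fun t => mulT_leaf m l t), tot_id]

theorem star_leaf_right (m l : Fin n) (x : NTree n →₀ K) :
    star m l x (Finsupp.single NTree.leaf 1) = x := by
  rw [star_eq,
    tot_congr (F := fun s => tot (fun t => mulT (K := K) m l s t) (Finsupp.single NTree.leaf 1))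
      (G := fun s => Finsupp.single s 1)
      (fun s => by simp only [tot_single, one_smul, mulT_leaf_right]),
    tot_id]

theorem deg_node_update (f : Fin n → NTree n) (i : Fin n) (v : NTree n) :
    (NTree.node (Function.update f i v)).deg
      = 1 + v.deg + ∑ j ∈ Finset.univ \ {i}, (f j).deg := by
  rw [NTree.deg_node]
  have : ∀ j, (Function.update f i v j).deg
      = Function.update (fun j => (f j).deg) i v.deg j := by
    intro j
    by_cases hj : j = i
    · subst hj; rw [Function.update_self, Function.update_self]
    · rw [Function.update_of_ne hj, Function.update_of_ne hj]
  rw [Finset.sum_congr rfl (fun j _ => this j),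
    Finset.sum_update_of_mem (Finset.mem_univ i)]
  omega

theorem deg_node_eq (f : Fin n → NTree n) (i : Fin n) :
    (NTree.node f).deg = 1 + (f i).deg + ∑ j ∈ Finset.univ \ {i}, (f j).deg := by
  conv_lhs => rw [show f = Function.update f i (f i) from (Function.update_eq_self i f).symm]
  rw [deg_node_update]

theorem graded (m l : Fin n) :
    ∀ (N : ℕ) (s t : NTree n), s.deg + t.deg ≤ N →
      ∀ u ∈ (mulT (K := K) m l s t).support, u.deg = s.deg + t.deg := by
  intro N
  induction N with
  | zero =>
    intro s t hN u hu
    cases s with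
    | leaf =>
      rw [mulT_leaf, Finsupp.support_single_ne_zero t one_ne_zero] at hu
      rw [Finset.mem_singleton] at hu
      subst hu; rw [deg_leaf]; omega
    | node f =>
      have := NTree.deg_lt f m; omega
  | succ N ih =>
    intro s t hN u hu
    cases s with
    | leaf =>
      rw [mulT_leaf, Finsupp.support_single_ne_zero t one_ne_zero] at hu
      rw [Finset.mem_singleton] at hu
      subst hu; rw [deg_leaf]; omega
    | node f =>
    cases t with
    | leaf =>
      rw [mulT_node_leaf, Finsupp.support_single_ne_zero _ one_ne_zero] at hu
      rw [Finset.mem_singleton] at hu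
      subst hu; rw [deg_leaf]; omega
    | node g =>
      classical
      have hdf := NTree.deg_lt f m
      have hdg := NTree.deg_lt g l
      rw [mulT_node_node] at hu
      have hu' := Finsupp.support_add hu
      rw [Finset.mem_union] at hu'
      rcases hu' with hu' | hu'
      · rw [nodeAt_eq] at hu'
        obtain ⟨v, hv, rfl⟩ := Finset.mem_image.mp (Finsupp.mapDomain_support hu')
        have hdeg := ih (f m) (.node g) (by omega) v hv
        rw [deg_node_update, deg_node_eq f m, hdeg]
        omega
      · rw [nodeAt_eq] at hu'
        obtain ⟨v, hv, rfl⟩ := Finset.mem_image.mp (Finsupp.mapDomain_support hu')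
        have hdeg := ih (.node f) (g l) (by omega) v hv
        rw [deg_node_update, deg_node_eq g l, hdeg]
        omega

end NAux
end AuxAssoc3

noncomputable section
open Finsupp

theorem nary_star_associative_unital_graded
    {K : Type*} [Field K] {n : ℕ} (m l : Fin n) :
    -- `*` on basis trees is the bilinear extension datum
    (∀ s t : NTree n,
        star m l (Finsupp.single s 1) (Finsupp.single t 1) = mulT (K := K) m l s t) ∧
    -- the single-leaf tree is a two-sided unit
    (∀ x : NTree n →₀ K, star m l (Finsupp.single NTree.leaf 1) x = x) ∧
    (∀ x : NTree n →₀ K, star m l x (Finsupp.single NTree.leaf 1) = x) ∧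
    -- `*` is associative
    (∀ x y z : NTree n →₀ K, star m l (star m l x y) z = star m l x (star m l y z)) ∧
    -- `*` is graded: `s * t` is a combination of trees of degree `deg s + deg t`
    (∀ s t : NTree n, ∀ u ∈ (mulT (K := K) m l s t).support,
        NTree.deg u = NTree.deg s + NTree.deg t) := by
  refine ⟨NAux.star_single_single m l, NAux.star_leaf_left m l, NAux.star_leaf_right m l,
    NAux.star_assoc m l, fun s t => NAux.graded m l (s.deg + t.deg) s t le_rfl⟩

end
end

section
/- Fix m, l ∈ {1,…,n}. On the augmentation ideal of k[Y_∞^{(n)}] (the span of planar n-ary trees different from 1), define bilinear operations on basis trees s = λ(s_1,…,s_n) and t = λ(t_1,…,t_n) by s ≺ t = λ(s_1,…,s_{m−1}, s_m * t, s_{m+1},…,s_n) and s ≻ t = λ(t_1,…,t_{l−1}, s * t_l, t_{l+1},…,t_n), where * is the associative product with unit 1 determined by s * t = s ≺ t + s ≻ t on trees ≠ 1. Then (≺, ≻) make the augmentation ideal a dendriform algebra: for all a, b, c in the augmentation ideal, (a ≺ b) ≺ c = a ≺ (b ≺ c) + a ≺ (b ≻ c), a ≻ (b ≺ c) = (a ≻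 b) ≺ c, and a ≻ (b ≻ c) = (a ≺ b) ≻ c + (a ≻ b) ≻ c; moreover both operations are graded with respect to the degree. -/
noncomputable section
open Finsupp

variable {K : Type*} [Field K] {n : ℕ}

/-- `s ≺ t = λ(s₁,…,s_{m−1}, s_m * t, s_{m+1},…,sₙ)` on non-leaf basis
trees (junk value `0` if one of the arguments is the single-leaf tree). -/
def precT (m l : Fin n) : NTree n → NTree n → (NTree n →₀ K)
  | .node f, .node g => nodeAt f m (mulT m l (f m) (.node g))
  | _, _ => 0

/-- `s ≻ t = λ(t₁,…,t_{l−1}, s * t_l, t_{l+1},…,tₙ)` on non-leaf basis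
trees. -/
def succT (m l : Fin n) : NTree n → NTree n → (NTree n →₀ K)
  | .node f, .node g => nodeAt g l (mulT m l (.node f) (g l))
  | _, _ => 0

/-- bilinear extension of `≺`. -/
def precF (m l : Fin n) (x y : NTree n →₀ K) : NTree n →₀ K :=
  x.sum fun s a => y.sum fun t b => (a * b) • precT m l s t

/-- bilinear extension of `≻`. -/
def succF (m l : Fin n) (x y : NTree n →₀ K) : NTree n →₀ K :=
  x.sum fun s a => y.sum fun t b => (a * b) • succT m l s t

/-- the augmentation ideal: the span of the trees different from `1`. -/
def augIdeal (K : Type*) [Field K] (n : ℕ) : Submodule K (NTree n →₀ K) :=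
  Submodule.span K {x | ∃ t : NTree n, t ≠ NTree.leaf ∧ x = Finsupp.single t 1}

/- ============ auxiliary development ============ -/

def bil (F : NTree n → NTree n → (NTree n →₀ K)) (x y : NTree n →₀ K) : NTree n →₀ K :=
  x.sum fun s a => y.sum fun t b => (a * b) • F s t

theorem star_eq_bil (m l : Fin n) : star (K := K) m l = bil (mulT m l) := rfl
theorem precF_eq_bil (m l : Fin n) : precF (K := K) m l = bil (precT m l) := rfl
theorem succF_eq_bil (m l : Fin n) : succF (K := K) m l = bil (succT m l) := rfl

variable {F : NTree n → NTree n → (NTree n →₀ K)}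

theorem bil_single_right (x : NTree n →₀ K) (u : NTree n) :
    bil F x (Finsupp.single u 1) = x.sum fun v c => c • F v u := by
  unfold bil
  refine Finsupp.sum_congr fun v _ => ?_
  rw [Finsupp.sum_single_index (by simp)]
  simp

theorem bil_single_left (y : NTree n →₀ K) (s : NTree n) :
    bil F (Finsupp.single s 1) y = y.sum fun t b => b • F s t := by
  unfold bil
  rw [Finsupp.sum_single_index (by simp)]
  simp

theorem bil_single_single (s t : NTree n) :
    bil F (Finsupp.single s 1) (Finsupp.single t 1) = F s t := by
  rw [bil_single_left, Finsupp.sum_single_index (by simp), one_smul]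

theorem bil_zero_left (y : NTree n →₀ K) : bil F 0 y = 0 := by
  simp [bil]

theorem bil_zero_right (x : NTree n →₀ K) : bil F x 0 = 0 := by
  simp [bil]

theorem bil_add_left (x x' y : NTree n →₀ K) :
    bil F (x + x') y = bil F x y + bil F x' y := by
  unfold bil
  rw [Finsupp.sum_add_index' (by intro s; simp) (by intro s a a'; rw [← Finsupp.sum_add]; congr 1; funext t b; rw [add_mul, add_smul])]

theorem bil_add_right (x y y' : NTree n →₀ K) :
    bil F x (y + y') = bil F x y + bil F x y' := by
  unfold bil
  rw [← Finsupp.sum_add]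
  refine Finsupp.sum_congr fun s _ => ?_
  rw [Finsupp.sum_add_index' (by intro t; simp) (by intro t b b'; rw [mul_add, add_smul])]

theorem bil_smul_left (r : K) (x y : NTree n →₀ K) :
    bil F (r • x) y = r • bil F x y := by
  unfold bil
  rw [Finsupp.sum_smul_index' (by intro s; simp), Finsupp.smul_sum]
  refine Finsupp.sum_congr fun s _ => ?_
  rw [Finsupp.smul_sum]
  refine Finsupp.sum_congr fun t _ => ?_
  rw [smul_eq_mul, mul_assoc, mul_smul]

theorem bil_smul_right (r : K) (x y : NTree n →₀ K) :
    bil F x (r • y) = r • bil F x y := by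
  unfold bil
  rw [Finsupp.smul_sum]
  refine Finsupp.sum_congr fun s _ => ?_
  rw [Finsupp.sum_smul_index' (by intro t; simp), Finsupp.smul_sum]
  refine Finsupp.sum_congr fun t _ => ?_
  rw [smul_eq_mul, smul_smul]
  ring_nf


noncomputable section
open Finsupp
open scoped Classical
variable {K : Type*} [Field K] {n : ℕ}

theorem nodeAt_eq_mapDomain (f : Fin n → NTree n) (i : Fin n) (x : NTree n →₀ K) :
    nodeAt f i x = Finsupp.mapDomain (fun u => NTree.node (Function.update f i u)) x := rfl

theorem nodeAt_add (f : Fin n → NTree n) (i : Fin n) (x y : NTree n →₀ K) :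
    nodeAt f i (x + y) = nodeAt f i x + nodeAt f i y := by
  simp [nodeAt_eq_mapDomain, Finsupp.mapDomain_add]

theorem nodeAt_smul (f : Fin n → NTree n) (i : Fin n) (r : K) (x : NTree n →₀ K) :
    nodeAt f i (r • x) = r • nodeAt f i x := by
  simp [nodeAt_eq_mapDomain, Finsupp.mapDomain_smul]

theorem nodeAt_sum (f : Fin n → NTree n) (i : Fin n) (x : NTree n →₀ K)
    (g : NTree n → K → (NTree n →₀ K)) :
    nodeAt f i (x.sum g) = x.sum fun v c => nodeAt f i (g v c) := by
  simp only [nodeAt_eq_mapDomain]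
  exact map_finsuppSum (Finsupp.lmapDomain K K (fun u => NTree.node (Function.update f i u))) x g

theorem nodeAt_support (f : Fin n → NTree n) (i : Fin n) (x : NTree n →₀ K) :
    (nodeAt f i x).support ⊆ x.support.image (fun u => NTree.node (Function.update f i u)) := by
  rw [nodeAt_eq_mapDomain]; exact Finsupp.mapDomain_support

theorem nodeAt_idem (f : Fin n → NTree n) (i : Fin n) (v : NTree n) (x : NTree n →₀ K) :
    nodeAt (Function.update f i v) i x = nodeAt f i x := by
  simp only [nodeAt_eq_mapDomain]
  congr 1
  funext u
  rw [Function.update_idem]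

theorem mulT_node_node (m l : Fin n) (f g : Fin n → NTree n) :
    mulT (K := K) m l (.node f) (.node g) =
      nodeAt f m (mulT m l (f m) (.node g)) + nodeAt g l (mulT m l (.node f) (g l)) := by
  rw [mulT]

theorem mulT_leaf_left (m l : Fin n) (t : NTree n) :
    mulT (K := K) m l .leaf t = Finsupp.single t 1 := by rw [mulT]

theorem mulT_leaf_right (m l : Fin n) (s : NTree n) :
    mulT (K := K) m l s .leaf = Finsupp.single s 1 := by
  cases s with
  | leaf => rw [mulT]
  | node f => rw [mulT]

theorem star_leaf_left (m l : Fin n) (x : NTree n →₀ K) :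
    star m l (Finsupp.single .leaf 1) x = x := by
  rw [star_eq_bil, bil_single_left]
  simp only [mulT_leaf_left, Finsupp.smul_single, smul_eq_mul, mul_one, Finsupp.sum_single]

theorem star_leaf_right (m l : Fin n) (x : NTree n →₀ K) :
    star m l x (Finsupp.single .leaf 1) = x := by
  rw [star_eq_bil, bil_single_right]
  simp only [mulT_leaf_right, Finsupp.smul_single, smul_eq_mul, mul_one, Finsupp.sum_single]

/-- node-supported (no leaf in the support). -/
def NS (x : NTree n →₀ K) : Prop := ∀ w ∈ x.support, w ≠ NTree.leaf

theorem NS_nodeAt (f : Fin n → NTree n) (i : Fin n) (x : NTree n →₀ K) :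
    NS (nodeAt f i x) := by
  intro w hw
  obtain ⟨u, -, rfl⟩ := Finset.mem_image.mp (nodeAt_support f i x hw)
  exact fun h => NTree.noConfusion rfl (heq_of_eq h)

theorem NS_add {x y : NTree n →₀ K} (hx : NS x) (hy : NS y) : NS (x + y) := by
  intro w hw
  rcases Finset.mem_union.mp (Finsupp.support_add hw) with h | h
  exacts [hx w h, hy w h]

theorem NS_mulT (m l : Fin n) (s t : NTree n) (h : s ≠ NTree.leaf ∨ t ≠ NTree.leaf) :
    NS (mulT (K := K) m l s t) := by
  cases s with
  | leaf =>
    rw [mulT_leaf_left]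
    intro w hw
    rw [Finsupp.support_single_ne_zero _ one_ne_zero, Finset.mem_singleton] at hw
    subst hw
    tauto
  | node f =>
    cases t with
    | leaf =>
      rw [mulT_leaf_right]
      intro w hw
      rw [Finsupp.support_single_ne_zero _ one_ne_zero, Finset.mem_singleton] at hw
      subst hw; exact fun h => NTree.noConfusion rfl (heq_of_eq h)
    | node g =>
      rw [mulT_node_node]
      exact NS_add (NS_nodeAt _ _ _) (NS_nodeAt _ _ _)

end

noncomputable section
open Finsupp
open scoped Classical
variable {K : Type*} [Field K] {n : ℕ}

theorem precT_node_node (m l : Fin n) (f g : Fin n → NTree n) :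
    precT (K := K) m l (.node f) (.node g) = nodeAt f m (mulT m l (f m) (.node g)) := rfl

theorem succT_node_node (m l : Fin n) (f g : Fin n → NTree n) :
    succT (K := K) m l (.node f) (.node g) = nodeAt g l (mulT m l (.node f) (g l)) := rfl

theorem prec_nodeAt_left (m l : Fin n) (f : Fin n → NTree n) (x : NTree n →₀ K)
    (h : Fin n → NTree n) :
    precF m l (nodeAt f m x) (Finsupp.single (.node h) 1)
      = nodeAt f m (star m l x (Finsupp.single (.node h) 1)) := by
  rw [precF_eq_bil, bil_single_right, star_eq_bil, bil_single_right, nodeAt_sum,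
    nodeAt_eq_mapDomain f m x,
    Finsupp.sum_mapDomain_index (by intro b; simp) (by intro b m1 m2; rw [add_smul])]
  refine Finsupp.sum_congr fun v _ => ?_
  rw [nodeAt_smul]
  congr 1
  rw [precT_node_node, Function.update_self, nodeAt_idem]

theorem prec_single_node_left (m l : Fin n) (f : Fin n → NTree n) (y : NTree n →₀ K)
    (hy : NS y) :
    precF m l (Finsupp.single (.node f) 1) y
      = nodeAt f m (star m l (Finsupp.single (f m) 1) y) := by
  rw [precF_eq_bil, bil_single_left, star_eq_bil, bil_single_left, nodeAt_sum]
  refine Finsupp.sum_congr fun w hw => ?_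
  rw [nodeAt_smul]
  congr 1
  cases w with
  | leaf => exact absurd rfl (hy _ hw)
  | node h' => rw [precT_node_node]

theorem succ_nodeAt_right (m l : Fin n) (f h : Fin n → NTree n) (y : NTree n →₀ K) :
    succF m l (Finsupp.single (.node f) 1) (nodeAt h l y)
      = nodeAt h l (star m l (Finsupp.single (.node f) 1) y) := by
  rw [succF_eq_bil, bil_single_left, star_eq_bil, bil_single_left, nodeAt_sum,
    nodeAt_eq_mapDomain h l y,
    Finsupp.sum_mapDomain_index (by intro b; simp) (by intro b m1 m2; rw [add_smul])]
  refine Finsupp.sum_congr fun w _ => ?_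
  rw [nodeAt_smul]
  congr 1
  rw [succT_node_node, Function.update_self, nodeAt_idem]

theorem succ_single_node_right (m l : Fin n) (h : Fin n → NTree n) (x : NTree n →₀ K)
    (hx : NS x) :
    succF m l x (Finsupp.single (.node h) 1)
      = nodeAt h l (star m l x (Finsupp.single (h l) 1)) := by
  rw [succF_eq_bil, bil_single_right, star_eq_bil, bil_single_right, nodeAt_sum]
  refine Finsupp.sum_congr fun v hv => ?_
  rw [nodeAt_smul]
  congr 1
  cases v with
  | leaf => exact absurd rfl (hx _ hv)
  | node f' => rw [succT_node_node]

theorem star_decomp_right (m l : Fin n) (f : Fin n → NTree n) (y : NTree n →₀ K)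
    (hy : NS y) :
    star m l (Finsupp.single (.node f) 1) y
      = precF m l (Finsupp.single (.node f) 1) y + succF m l (Finsupp.single (.node f) 1) y := by
  rw [star_eq_bil, precF_eq_bil, succF_eq_bil, bil_single_left, bil_single_left,
    bil_single_left, ← Finsupp.sum_add]
  refine Finsupp.sum_congr fun w hw => ?_
  cases w with
  | leaf => exact absurd rfl (hy _ hw)
  | node g => rw [mulT_node_node, precT_node_node, succT_node_node, smul_add]

theorem star_decomp_left (m l : Fin n) (h : Fin n → NTree n) (x : NTree n →₀ K)
    (hx : NS x) :
    star m l x (Finsupp.single (.node h) 1)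
      = precF m l x (Finsupp.single (.node h) 1) + succF m l x (Finsupp.single (.node h) 1) := by
  rw [star_eq_bil, precF_eq_bil, succF_eq_bil, bil_single_right, bil_single_right,
    bil_single_right, ← Finsupp.sum_add]
  refine Finsupp.sum_congr fun v hv => ?_
  cases v with
  | leaf => exact absurd rfl (hx _ hv)
  | node f => rw [mulT_node_node, precT_node_node, succT_node_node, smul_add]

end

noncomputable section
open Finsupp
open scoped Classical
variable {K : Type*} [Field K] {n : ℕ}

theorem mulT_split (m l : Fin n) (f g : Fin n → NTree n) :
    mulT (K := K) m l (.node f) (.node g)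
      = precT m l (.node f) (.node g) + succT m l (.node f) (.node g) := by
  rw [mulT_node_node, precT_node_node, succT_node_node]

theorem A1lem (m l : Fin n) (f g h : Fin n → NTree n)
    (IH : star m l (mulT (K := K) m l (f m) (.node g)) (Finsupp.single (.node h) 1)
      = star m l (Finsupp.single (f m) 1) (mulT m l (.node g) (.node h))) :
    precF (K := K) m l (precT m l (.node f) (.node g)) (Finsupp.single (.node h) 1)
      = precF m l (Finsupp.single (.node f) 1) (mulT m l (.node g) (.node h)) := by
  rw [precT_node_node, prec_nodeAt_left, IH,
    prec_single_node_left m l f _ (NS_mulT m l _ _ (Or.inl (fun x => NTree.noConfusion rfl (heq_of_eq x))))]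

theorem A3lem (m l : Fin n) (f g h : Fin n → NTree n)
    (IH : star m l (mulT (K := K) m l (.node f) (.node g)) (Finsupp.single (h l) 1)
      = star m l (Finsupp.single (.node f) 1) (mulT m l (.node g) (h l))) :
    succF (K := K) m l (mulT m l (.node f) (.node g)) (Finsupp.single (.node h) 1)
      = succF m l (Finsupp.single (.node f) 1) (succT m l (.node g) (.node h)) := by
  rw [succ_single_node_right m l h _ (NS_mulT m l _ _ (Or.inl (fun x => NTree.noConfusion rfl (heq_of_eq x)))),
    IH, succT_node_node, succ_nodeAt_right]

theorem A2lem (m l : Fin n) (f g h : Fin n → NTree n)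
    (IH : star m l (mulT (K := K) m l (.node f) (g l)) (Finsupp.single (.node h) 1)
      = star m l (Finsupp.single (.node f) 1) (mulT m l (g l) (.node h))) :
    precF (K := K) m l (succT m l (.node f) (.node g)) (Finsupp.single (.node h) 1)
      = succF m l (Finsupp.single (.node f) 1) (precT m l (.node g) (.node h)) := by
  by_cases hml : m = l
  · subst hml
    rw [succT_node_node, prec_nodeAt_left, IH, precT_node_node, succ_nodeAt_right]
  · have hlm : l ≠ m := fun e => hml e.symm
    rw [succT_node_node, precT_node_node, precF_eq_bil, bil_single_right,
      succF_eq_bil, bil_single_left,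
      nodeAt_eq_mapDomain g l _, nodeAt_eq_mapDomain g m _,
      Finsupp.sum_mapDomain_index (by intro b; simp) (by intro b m1 m2; rw [add_smul]),
      Finsupp.sum_mapDomain_index (by intro b; simp) (by intro b m1 m2; rw [add_smul])]
    trans ((mulT m l (.node f) (g l) : NTree n →₀ K).sum fun w c =>
        (mulT m l (g m) (.node h) : NTree n →₀ K).sum fun z d =>
          Finsupp.single (NTree.node (Function.update (Function.update g m z) l w)) (c * d))
    · refine Finsupp.sum_congr fun w _ => ?_
      rw [precT_node_node, Function.update_of_ne hml, nodeAt_eq_mapDomain,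
        Finsupp.mapDomain, Finsupp.smul_sum]
      refine Finsupp.sum_congr fun z _ => ?_
      rw [Finsupp.smul_single, smul_eq_mul, Function.update_comm hlm]
    · rw [Finsupp.sum_comm]
      refine Finsupp.sum_congr fun z _ => ?_
      rw [succT_node_node, Function.update_of_ne hlm, nodeAt_eq_mapDomain,
        Finsupp.mapDomain, Finsupp.smul_sum]
      refine Finsupp.sum_congr fun w _ => ?_
      rw [Finsupp.smul_single, smul_eq_mul, mul_comm]

end

noncomputable section
open Finsupp
open scoped Classical
variable {K : Type*} [Field K] {n : ℕ}

theorem assoc_aux (m l : Fin n) : ∀ N, ∀ s t u : NTree n,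
    s.deg + t.deg + u.deg < N →
    star m l (mulT (K := K) m l s t) (Finsupp.single u 1)
      = star m l (Finsupp.single s 1) (mulT m l t u) := by
  intro N
  induction N with
  | zero => intro s t u hd; omega
  | succ N IH =>
    intro s t u hd
    cases s with
    | leaf => rw [mulT_leaf_left, star_leaf_left, star_eq_bil, bil_single_single]
    | node f =>
      cases t with
      | leaf => rw [mulT_leaf_right, mulT_leaf_left]
      | node g =>
        cases u with
        | leaf =>
          rw [mulT_leaf_right, star_leaf_right, star_eq_bil, bil_single_single]
        | node h =>
          have hfm := NTree.deg_lt f m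
          have hgl := NTree.deg_lt g l
          have hhl := NTree.deg_lt h l
          have IH1 := IH (f m) (.node g) (.node h) (by omega)
          have IH2 := IH (.node f) (g l) (.node h) (by omega)
          have IH3 := IH (.node f) (.node g) (h l) (by omega)
          rw [star_decomp_left m l h _ (NS_mulT m l _ _ (Or.inl (fun x => NTree.noConfusion rfl (heq_of_eq x)))),
            star_decomp_right m l f _ (NS_mulT m l _ _ (Or.inl (fun x => NTree.noConfusion rfl (heq_of_eq x))))]
          have e1 : precF (K := K) m l (mulT m l (.node f) (.node g)) (Finsupp.single (.node h) 1)
              = precF m l (Finsupp.single (.node f) 1) (mulT m l (.node g) (.node h))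
                + succF m l (Finsupp.single (.node f) 1) (precT m l (.node g) (.node h)) := by
            have hadd : precF (K := K) m l
                (precT m l (.node f) (.node g) + succT m l (.node f) (.node g))
                (Finsupp.single (.node h) 1)
              = precF m l (precT m l (.node f) (.node g)) (Finsupp.single (.node h) 1)
                + precF m l (succT m l (.node f) (.node g)) (Finsupp.single (.node h) 1) :=
              bil_add_left _ _ _
            rw [mulT_split, hadd, A1lem m l f g h IH1, A2lem m l f g h IH2]
          have e3 := A3lem (K := K) m l f g h IH3
          rw [e1, e3]
          have e2 : succF (K := K) m l (Finsupp.single (.node f) 1) (mulT m l (.node g) (.node h))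
              = succF m l (Finsupp.single (.node f) 1) (precT m l (.node g) (.node h))
                + succF m l (Finsupp.single (.node f) 1) (succT m l (.node g) (.node h)) := by
            have hadd : succF (K := K) m l (Finsupp.single (.node f) 1)
                (precT m l (.node g) (.node h) + succT m l (.node g) (.node h))
              = succF m l (Finsupp.single (.node f) 1) (precT m l (.node g) (.node h))
                + succF m l (Finsupp.single (.node f) 1) (succT m l (.node g) (.node h)) :=
              bil_add_right _ _ _
            rw [mulT_split, hadd]
          rw [e2]
          abel

theorem assoc (m l : Fin n) (s t u : NTree n) :
    star m l (mulT (K := K) m l s t) (Finsupp.single u 1)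
      = star m l (Finsupp.single s 1) (mulT m l t u) :=
  assoc_aux m l (s.deg + t.deg + u.deg + 1) s t u (by omega)

end

noncomputable section
open Finsupp
open scoped Classical
variable {K : Type*} [Field K] {n : ℕ}

theorem nodeAt_deg (f : Fin n → NTree n) (i : Fin n) (x : NTree n →₀ K) (d : ℕ)
    (hx : ∀ v ∈ x.support, v.deg = d) :
    ∀ w ∈ (nodeAt f i x).support, w.deg + (f i).deg = (NTree.node f).deg + d := by
  intro w hw
  obtain ⟨v, hv, rfl⟩ := Finset.mem_image.mp (nodeAt_support f i x hw)
  have hupd : ∀ j, (Function.update f i v j).deg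
      = Function.update (fun j => (f j).deg) i v.deg j := by
    intro j
    by_cases hj : j = i
    · subst hj; simp
    · simp [Function.update_of_ne hj]
  have hsum : ∑ j, (Function.update f i v j).deg
      = v.deg + ∑ j ∈ Finset.univ \ {i}, (f j).deg := by
    rw [Finset.sum_congr rfl (fun j _ => hupd j),
      Finset.sum_update_of_mem (Finset.mem_univ i)]
  have h2 : ∑ j, (f j).deg = (f i).deg + ∑ j ∈ Finset.univ \ {i}, (f j).deg :=
    Finset.sum_eq_add_sum_sdiff_singleton_of_mem (Finset.mem_univ i) _
  rw [NTree.deg_node, NTree.deg_node, hsum, h2, hx v hv]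
  omega

theorem deg_leaf : (NTree.leaf : NTree n).deg = 0 := rfl

theorem mulT_deg_aux (m l : Fin n) : ∀ N, ∀ s t : NTree n, s.deg + t.deg < N →
    ∀ w ∈ (mulT (K := K) m l s t).support, w.deg = s.deg + t.deg := by
  intro N
  induction N with
  | zero => intro s t h; omega
  | succ N IH =>
    intro s t hN w hw
    cases s with
    | leaf =>
      rw [mulT_leaf_left] at hw
      have := Finsupp.support_single_subset hw
      rw [Finset.mem_singleton] at this
      subst this; rw [deg_leaf]; omega
    | node f =>
      cases t with
      | leaf =>
        rw [mulT_leaf_right] at hw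
        have := Finsupp.support_single_subset hw
        rw [Finset.mem_singleton] at this
        subst this; rw [deg_leaf]; omega
      | node g =>
        rw [mulT_node_node] at hw
        have hfm := NTree.deg_lt f m
        have hgl := NTree.deg_lt g l
        rcases Finset.mem_union.mp (Finsupp.support_add hw) with h | h
        · have := nodeAt_deg f m _ ((f m).deg + (NTree.node g).deg)
            (IH (f m) (.node g) (by omega)) w h
          omega
        · have := nodeAt_deg g l _ ((NTree.node f).deg + (g l).deg)
            (IH (.node f) (g l) (by omega)) w h
          omega

theorem mulT_deg (m l : Fin n) (s t : NTree n) :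
    ∀ w ∈ (mulT (K := K) m l s t).support, w.deg = s.deg + t.deg :=
  mulT_deg_aux m l (s.deg + t.deg + 1) s t (by omega)

theorem precT_deg (m l : Fin n) (f g : Fin n → NTree n) :
    ∀ w ∈ (precT (K := K) m l (.node f) (.node g)).support,
      w.deg = (NTree.node f).deg + (NTree.node g).deg := by
  intro w hw
  rw [precT_node_node] at hw
  have := nodeAt_deg f m _ ((f m).deg + (NTree.node g).deg) (mulT_deg m l _ _) w hw
  have hfm := NTree.deg_lt f m
  omega

theorem succT_deg (m l : Fin n) (f g : Fin n → NTree n) :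
    ∀ w ∈ (succT (K := K) m l (.node f) (.node g)).support,
      w.deg = (NTree.node f).deg + (NTree.node g).deg := by
  intro w hw
  rw [succT_node_node] at hw
  have := nodeAt_deg g l _ ((NTree.node f).deg + (g l).deg) (mulT_deg m l _ _) w hw
  have hgl := NTree.deg_lt g l
  omega

end

noncomputable section
open Finsupp
open scoped Classical
variable {K : Type*} [Field K] {n : ℕ}

theorem span3 {M : Type*} [AddCommMonoid M] [Module K M] {S : Set M}
    {P : M → M → M → Prop}
    (hS : ∀ a ∈ S, ∀ b ∈ S, ∀ c ∈ S, P a b c)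
    (h01 : ∀ b c, P 0 b c) (h02 : ∀ a c, P a 0 c) (h03 : ∀ a b, P a b 0)
    (hadd1 : ∀ a a' b c, P a b c → P a' b c → P (a + a') b c)
    (hadd2 : ∀ a b b' c, P a b c → P a b' c → P a (b + b') c)
    (hadd3 : ∀ a b c c', P a b c → P a b c' → P a b (c + c'))
    (hsmul1 : ∀ (r : K) a b c, P a b c → P (r • a) b c)
    (hsmul2 : ∀ (r : K) a b c, P a b c → P a (r • b) c)
    (hsmul3 : ∀ (r : K) a b c, P a b c → P a b (r • c)) :
    ∀ a ∈ Submodule.span K S, ∀ b ∈ Submodule.span K S, ∀ c ∈ Submodule.span K S, P a b c := by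
  have H3 : ∀ a b, (∀ z ∈ S, P a b z) → ∀ c ∈ Submodule.span K S, P a b c := by
    intro a b h c hc
    induction hc using Submodule.span_induction with
    | mem z hz => exact h z hz
    | zero => exact h03 a b
    | add x y _ _ hx hy => exact hadd3 a b x y hx hy
    | smul r x _ hx => exact hsmul3 r a b x hx
  have H2 : ∀ a, (∀ y ∈ S, ∀ z ∈ S, P a y z) →
      ∀ b ∈ Submodule.span K S, ∀ c ∈ Submodule.span K S, P a b c := by
    intro a h b hb
    induction hb using Submodule.span_induction with
    | mem y hy => exact H3 a y (h y hy)
    | zero => exact H3 a 0 fun z _ => h02 a z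
    | add x y _ _ hx hy => intro c hc; exact hadd2 a x y c (hx c hc) (hy c hc)
    | smul r x _ hx => intro c hc; exact hsmul2 r a x c (hx c hc)
  intro a ha
  induction ha using Submodule.span_induction with
  | mem x hx => exact H2 x (hS x hx)
  | zero => intro b _ c _; exact h01 b c
  | add x y _ _ hx hy => intro b hb c hc; exact hadd1 x y b c (hx b hb c hc) (hy b hb c hc)
  | smul r x _ hx => intro b hb c hc; exact hsmul1 r x b c (hx b hb c hc)

theorem precF_single_single (m l : Fin n) (s t : NTree n) :
    precF (K := K) m l (Finsupp.single s 1) (Finsupp.single t 1) = precT m l s t :=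
  bil_single_single s t
theorem succF_single_single (m l : Fin n) (s t : NTree n) :
    succF (K := K) m l (Finsupp.single s 1) (Finsupp.single t 1) = succT m l s t :=
  bil_single_single s t
theorem precF_zero_left (m l : Fin n) (y : NTree n →₀ K) : precF m l 0 y = 0 := bil_zero_left y
theorem precF_zero_right (m l : Fin n) (x : NTree n →₀ K) : precF m l x 0 = 0 := bil_zero_right x
theorem succF_zero_left (m l : Fin n) (y : NTree n →₀ K) : succF m l 0 y = 0 := bil_zero_left y
theorem succF_zero_right (m l : Fin n) (x : NTree n →₀ K) : succF m l x 0 = 0 := bil_zero_right x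
theorem precF_add_left (m l : Fin n) (x x' y : NTree n →₀ K) :
    precF m l (x + x') y = precF m l x y + precF m l x' y := bil_add_left x x' y
theorem precF_add_right (m l : Fin n) (x y y' : NTree n →₀ K) :
    precF m l x (y + y') = precF m l x y + precF m l x y' := bil_add_right x y y'
theorem succF_add_left (m l : Fin n) (x x' y : NTree n →₀ K) :
    succF m l (x + x') y = succF m l x y + succF m l x' y := bil_add_left x x' y
theorem succF_add_right (m l : Fin n) (x y y' : NTree n →₀ K) :
    succF m l x (y + y') = succF m l x y + succF m l x y' := bil_add_right x y y'
theorem precF_smul_left (m l : Fin n) (r : K) (x y : NTree n →₀ K) :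
    precF m l (r • x) y = r • precF m l x y := bil_smul_left r x y
theorem precF_smul_right (m l : Fin n) (r : K) (x y : NTree n →₀ K) :
    precF m l x (r • y) = r • precF m l x y := bil_smul_right r x y
theorem succF_smul_left (m l : Fin n) (r : K) (x y : NTree n →₀ K) :
    succF m l (r • x) y = r • succF m l x y := bil_smul_left r x y
theorem succF_smul_right (m l : Fin n) (r : K) (x y : NTree n →₀ K) :
    succF m l x (r • y) = r • succF m l x y := bil_smul_right r x y

theorem base1 (m l : Fin n) (s t u : NTree n)
    (hs : s ≠ NTree.leaf) (ht : t ≠ NTree.leaf) (hu : u ≠ NTree.leaf) :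
    precF (K := K) m l (precF m l (Finsupp.single s 1) (Finsupp.single t 1)) (Finsupp.single u 1)
      = precF m l (Finsupp.single s 1) (precF m l (Finsupp.single t 1) (Finsupp.single u 1))
        + precF m l (Finsupp.single s 1) (succF m l (Finsupp.single t 1) (Finsupp.single u 1)) := by
  cases s with
  | leaf => exact absurd rfl hs
  | node f =>
  cases t with
  | leaf => exact absurd rfl ht
  | node g =>
  cases u with
  | leaf => exact absurd rfl hu
  | node h =>
  rw [precF_single_single, precF_single_single, succF_single_single,
    A1lem m l f g h (assoc m l (f m) (.node g) (.node h)),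
    ← precF_add_right, ← mulT_split]

theorem base2 (m l : Fin n) (s t u : NTree n)
    (hs : s ≠ NTree.leaf) (ht : t ≠ NTree.leaf) (hu : u ≠ NTree.leaf) :
    succF (K := K) m l (Finsupp.single s 1) (precF m l (Finsupp.single t 1) (Finsupp.single u 1))
      = precF m l (succF m l (Finsupp.single s 1) (Finsupp.single t 1)) (Finsupp.single u 1) := by
  cases s with
  | leaf => exact absurd rfl hs
  | node f =>
  cases t with
  | leaf => exact absurd rfl ht
  | node g =>
  cases u with
  | leaf => exact absurd rfl hu
  | node h =>
  rw [precF_single_single, succF_single_single]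
  exact (A2lem m l f g h (assoc m l (.node f) (g l) (.node h))).symm

theorem base3 (m l : Fin n) (s t u : NTree n)
    (hs : s ≠ NTree.leaf) (ht : t ≠ NTree.leaf) (hu : u ≠ NTree.leaf) :
    succF (K := K) m l (Finsupp.single s 1) (succF m l (Finsupp.single t 1) (Finsupp.single u 1))
      = succF m l (precF m l (Finsupp.single s 1) (Finsupp.single t 1)) (Finsupp.single u 1)
        + succF m l (succF m l (Finsupp.single s 1) (Finsupp.single t 1)) (Finsupp.single u 1) := by
  cases s with
  | leaf => exact absurd rfl hs
  | node f =>
  cases t with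
  | leaf => exact absurd rfl ht
  | node g =>
  cases u with
  | leaf => exact absurd rfl hu
  | node h =>
  rw [succF_single_single, precF_single_single, succF_single_single,
    ← succF_add_left, ← mulT_split,
    A3lem m l f g h (assoc m l (.node f) (.node g) (h l))]


end

theorem nary_dendriform
    {K : Type*} [Field K] {n : ℕ} (m l : Fin n) :
    -- `*` is determined by `s * t = s ≺ t + s ≻ t` on trees ≠ 1
    (∀ s t : NTree n, s ≠ NTree.leaf → t ≠ NTree.leaf →
        mulT (K := K) m l s t = precT m l s t + succT m l s t) ∧
    -- the dendriform identities on the augmentation ideal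
    (∀ a ∈ augIdeal K n, ∀ b ∈ augIdeal K n, ∀ c ∈ augIdeal K n,
        precF m l (precF m l a b) c
          = precF m l a (precF m l b c) + precF m l a (succF m l b c)) ∧
    (∀ a ∈ augIdeal K n, ∀ b ∈ augIdeal K n, ∀ c ∈ augIdeal K n,
        succF m l a (precF m l b c) = precF m l (succF m l a b) c) ∧
    (∀ a ∈ augIdeal K n, ∀ b ∈ augIdeal K n, ∀ c ∈ augIdeal K n,
        succF m l a (succF m l b c)
          = succF m l (precF m l a b) c + succF m l (succF m l a b) c) ∧
    -- both operations are graded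
    (∀ s t : NTree n, s ≠ NTree.leaf → t ≠ NTree.leaf →
        ∀ u ∈ (precT (K := K) m l s t).support,
          NTree.deg u = NTree.deg s + NTree.deg t) ∧
    (∀ s t : NTree n, s ≠ NTree.leaf → t ≠ NTree.leaf →
        ∀ u ∈ (succT (K := K) m l s t).support,
          NTree.deg u = NTree.deg s + NTree.deg t) := by
  refine ⟨?_, ?_, ?_, ?_, ?_, ?_⟩
  · intro s t hs ht
    cases s with
    | leaf => exact absurd rfl hs
    | node f =>
    cases t with
    | leaf => exact absurd rfl ht
    | node g => exact mulT_split m l f g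
  · refine span3 (fun a ha b hb c hc => ?_) ?_ ?_ ?_ ?_ ?_ ?_ ?_ ?_ ?_
    · obtain ⟨s, hs, rfl⟩ := ha
      obtain ⟨t, ht, rfl⟩ := hb
      obtain ⟨u, hu, rfl⟩ := hc
      exact base1 m l s t u hs ht hu
    · intro b c; simp only [precF_zero_left, precF_zero_right, succF_zero_left, succF_zero_right, add_zero]
    · intro a c
      simp only [precF_zero_left, precF_zero_right, succF_zero_left, succF_zero_right, add_zero]
    · intro a b
      simp only [precF_zero_left, precF_zero_right, succF_zero_left, succF_zero_right, add_zero]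
    · intro a a' b c h1 h2
      simp only [precF_add_left]; rw [h1, h2]; abel
    · intro a b b' c h1 h2
      simp only [precF_add_left, precF_add_right, succF_add_left]; rw [h1, h2]; abel
    · intro a b c c' h1 h2
      simp only [precF_add_right, succF_add_right]; rw [h1, h2]; abel
    · intro r a b c h
      simp only [precF_smul_left]; rw [h, smul_add]
    · intro r a b c h
      simp only [precF_smul_left, precF_smul_right, succF_smul_left]; rw [h, smul_add]
    · intro r a b c h
      simp only [precF_smul_right, succF_smul_right]; rw [h, smul_add]
  · refine span3 (fun a ha b hb c hc => ?_) ?_ ?_ ?_ ?_ ?_ ?_ ?_ ?_ ?_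
    · obtain ⟨s, hs, rfl⟩ := ha
      obtain ⟨t, ht, rfl⟩ := hb
      obtain ⟨u, hu, rfl⟩ := hc
      exact base2 m l s t u hs ht hu
    · intro b c; simp only [precF_zero_left, precF_zero_right, succF_zero_left, succF_zero_right, add_zero]
    · intro a c; simp only [precF_zero_left, precF_zero_right, succF_zero_left, succF_zero_right, add_zero]
    · intro a b; simp only [precF_zero_left, precF_zero_right, succF_zero_left, succF_zero_right, add_zero]
    · intro a a' b c h1 h2
      simp only [succF_add_left]; rw [h1, h2, ← precF_add_left]
    · intro a b b' c h1 h2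
      simp only [precF_add_left, succF_add_right]; rw [h1, h2]
    · intro a b c c' h1 h2
      simp only [precF_add_right, succF_add_right]; rw [h1, h2]
    · intro r a b c h
      simp only [succF_smul_left]; rw [h, ← precF_smul_left]
    · intro r a b c h
      simp only [succF_smul_right, precF_smul_left]; rw [h]
    · intro r a b c h
      simp only [precF_smul_right, succF_smul_right]; rw [h]
  · refine span3 (fun a ha b hb c hc => ?_) ?_ ?_ ?_ ?_ ?_ ?_ ?_ ?_ ?_
    · obtain ⟨s, hs, rfl⟩ := ha
      obtain ⟨t, ht, rfl⟩ := hb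
      obtain ⟨u, hu, rfl⟩ := hc
      exact base3 m l s t u hs ht hu
    · intro b c
      simp only [precF_zero_left, precF_zero_right, succF_zero_left, succF_zero_right, add_zero]
    · intro a c
      simp only [precF_zero_left, precF_zero_right, succF_zero_left, succF_zero_right, add_zero]
    · intro a b
      simp only [precF_zero_left, precF_zero_right, succF_zero_left, succF_zero_right, add_zero]
    · intro a a' b c h1 h2
      simp only [succF_add_left, precF_add_left]; rw [h1, h2]; abel
    · intro a b b' c h1 h2
      simp only [succF_add_left, succF_add_right, precF_add_right]; rw [h1, h2]; abel
    · intro a b c c' h1 h2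
      simp only [succF_add_right, succF_add_left]; rw [h1, h2]; abel
    · intro r a b c h
      simp only [succF_smul_left, precF_smul_left]; rw [h, smul_add]
    · intro r a b c h
      simp only [succF_smul_left, succF_smul_right, precF_smul_right]; rw [h, smul_add]
    · intro r a b c h
      simp only [succF_smul_right]; rw [h, smul_add]
  · intro s t hs ht
    cases s with
    | leaf => exact absurd rfl hs
    | node f =>
    cases t with
    | leaf => exact absurd rfl ht
    | node g => exact precT_deg m l f g
  · intro s t hs ht
    cases s with
    | leaf => exact absurd rfl hs
    | node f =>
    cases t with
    | leaf => exact absurd rfl ht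
    | node g => exact succT_deg m l f g


end
end
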